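/- arXiv:1604.02244 — 3 statements merged into one kernel-verified Lean document; each statement's English description precedes it below -/
import Mathlib

section
/- (Exponential John--Nirenberg inequality.) There is a constant $\varepsilon_n>0$, depending only on the dimension $n$, such that if $b$ is a real-valued locally integrable function on $\mathbb{R}^n$ with $\|b\|_{BMO}\le \varepsilon_n$, then for every cube $Q\subset\mathbb{R}^n$, $\frac{1}{|Q|}\int_Q e^{|b-\langle b\rangle_Q|}\,dx\le 2$. -/
open MeasureTheory ENNReal

noncomputable section

/-- An axis-parallel cube in `ℝⁿ` (with positive side length). -/
def IsCube {n : ℕ} (Q : Set (Fin n → ℝ)) : Prop :=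
  ∃ (a : Fin n → ℝ) (h : ℝ), 0 < h ∧ Q = Set.Icc a (a + fun _ => h)

/-- Average of an `ℝ≥0∞`-valued function over a set. -/
def avgL {n : ℕ} (Q : Set (Fin n → ℝ)) (f : (Fin n → ℝ) → ℝ≥0∞) : ℝ≥0∞ :=
  (∫⁻ x in Q, f x) / volume Q

/-- Average of a real-valued function over a set. -/
def avgR {n : ℕ} (Q : Set (Fin n → ℝ)) (f : (Fin n → ℝ) → ℝ) : ℝ :=
  (∫ x in Q, f x) / (volume Q).toReal

/-- The `A_p` product for a single cube. -/
def apTerm (n : ℕ) (p : ℝ) (w : (Fin n → ℝ) → ℝ) (Q : Set (Fin n → ℝ)) : ℝ≥0∞ :=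
  avgL Q (fun x => ENNReal.ofReal (w x)) *
    avgL Q (fun x => ENNReal.ofReal (w x) ^ (1 - p / (p - 1))) ^ (p - 1)

/-- The Muckenhoupt `A_p` constant. -/
def apConst (n : ℕ) (p : ℝ) (w : (Fin n → ℝ) → ℝ) : ℝ≥0∞ :=
  ⨆ (Q : Set (Fin n → ℝ)) (_ : IsCube Q), apTerm n p w Q

/-- A weight: locally integrable and a.e. positive. -/
def IsWeight (n : ℕ) (w : (Fin n → ℝ) → ℝ) : Prop :=
  LocallyIntegrable w volume ∧ ∀ᵐ x ∂(volume : Measure (Fin n → ℝ)), 0 < w x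

/-- BMO norm of a real-valued function. -/
def bmoNorm (n : ℕ) (b : (Fin n → ℝ) → ℝ) : ℝ≥0∞ :=
  ⨆ (Q : Set (Fin n → ℝ)) (_ : IsCube Q),
    (∫⁻ x in Q, (‖b x - avgR Q b‖₊ : ℝ≥0∞)) / volume Q

/-- Weighted BMO norm of a real-valued function. -/
def bmoNormW (n : ℕ) (ν b : (Fin n → ℝ) → ℝ) : ℝ≥0∞ :=
  ⨆ (Q : Set (Fin n → ℝ)) (_ : IsCube Q),
    (∫⁻ x in Q, (‖b x - avgR Q b‖₊ : ℝ≥0∞)) / (∫⁻ x in Q, ENNReal.ofReal (ν x))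

/-- The (uncentered, cube-based) Hardy–Littlewood maximal operator. -/
def hlMax (n : ℕ) (f : (Fin n → ℝ) → ℝ≥0∞) (x : Fin n → ℝ) : ℝ≥0∞ :=
  ⨆ (Q : Set (Fin n → ℝ)) (_ : IsCube Q) (_ : x ∈ Q), avgL Q f

/-- The Fujii–Wilson `A_∞` constant. -/
def fwConst (n : ℕ) (w : (Fin n → ℝ) → ℝ) : ℝ≥0∞ :=
  ⨆ (Q : Set (Fin n → ℝ)) (_ : IsCube Q),
    (∫⁻ x in Q, hlMax n (Q.indicator fun y => ENNReal.ofReal (w y)) x) /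
      (∫⁻ x in Q, ENNReal.ofReal (w x))

/-- `(w)_{A_p} := max([w]_{A_∞}, [σ]_{A_∞})` where `σ = w^{1-p'}` is the dual weight. -/
def apMax (n : ℕ) (p : ℝ) (w : (Fin n → ℝ) → ℝ) : ℝ≥0∞ :=
  max (fwConst n w) (fwConst n (fun x => w x ^ (1 - p / (p - 1))))

/-- The `L^p(w)` (quasi-)norm. -/
def wNorm (n : ℕ) (p : ℝ) (w : (Fin n → ℝ) → ℝ) (f : (Fin n → ℝ) → ℝ) : ℝ≥0∞ :=
  (∫⁻ x, (‖f x‖₊ : ℝ≥0∞) ^ p * ENNReal.ofReal (w x)) ^ (1 / p)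

/-- The operator (quasi-)norm from `L^p(μ)` to `L^p(λ)`. -/
def opNormW (n : ℕ) (p : ℝ) (μ lam : (Fin n → ℝ) → ℝ)
    (S : ((Fin n → ℝ) → ℝ) → ((Fin n → ℝ) → ℝ)) : ℝ≥0∞ :=
  sInf {c : ℝ≥0∞ | ∀ f, wNorm n p lam (S f) ≤ c * wNorm n p μ f}

/-- The commutator `[b, S] = M_b ∘ S - S ∘ M_b`. -/
def commOp (n : ℕ) (b : (Fin n → ℝ) → ℝ)
    (S : ((Fin n → ℝ) → ℝ) → ((Fin n → ℝ) → ℝ)) :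
    ((Fin n → ℝ) → ℝ) → ((Fin n → ℝ) → ℝ) :=
  fun f x => b x * S f x - S (fun y => b y * f y) x


namespace JN

variable {n : ℕ}

/-- Half-open cube. -/
def hcube (a : Fin n → ℝ) (h : ℝ) : Set (Fin n → ℝ) :=
  Set.pi Set.univ fun i => Set.Ico (a i) (a i + h)

lemma measurableSet_hcube (a : Fin n → ℝ) (h : ℝ) : MeasurableSet (hcube a h) :=
  MeasurableSet.univ_pi fun _ => measurableSet_Ico

lemma volume_hcube (a : Fin n → ℝ) (h : ℝ) :
    volume (hcube a h) = ENNReal.ofReal h ^ n := by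
  rw [hcube, volume_pi_pi]
  simp [Real.volume_Ico]

lemma hcube_subset_Icc (a : Fin n → ℝ) (h : ℝ) :
    hcube a h ⊆ Set.Icc a (a + fun _ => h) := by
  intro x hx
  rw [← Set.pi_univ_Icc]
  intro i _
  have := hx i (Set.mem_univ i)
  exact ⟨this.1, le_of_lt (by simpa using this.2)⟩

lemma volume_hcube_ne_zero (a : Fin n → ℝ) {h : ℝ} (hh : 0 < h) :
    volume (hcube a h) ≠ 0 := by
  rw [volume_hcube]
  exact pow_ne_zero _ (by simpa using hh)

lemma volume_hcube_ne_top (a : Fin n → ℝ) (h : ℝ) :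
    volume (hcube a h) ≠ ⊤ := by
  rw [volume_hcube]
  exact ENNReal.pow_ne_top ENNReal.ofReal_ne_top

lemma volume_hcube_toReal (a : Fin n → ℝ) {h : ℝ} (hh : 0 ≤ h) :
    (volume (hcube a h)).toReal = h ^ n := by
  rw [volume_hcube, ENNReal.toReal_pow, ENNReal.toReal_ofReal hh]

/-- Base point of a dyadic child. -/
def cbase (a : Fin n → ℝ) (h : ℝ) (ι : Fin n → Bool) : Fin n → ℝ :=
  fun i => a i + if ι i then h / 2 else 0

lemma child_subset {a : Fin n → ℝ} {h : ℝ} (hh : 0 ≤ h) (ι : Fin n → Bool) :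
    hcube (cbase a h ι) (h / 2) ⊆ hcube a h := by
  intro x hx i _
  have hxi := hx i (Set.mem_univ i)
  rcases hxi with ⟨h1, h2⟩
  unfold cbase at h1 h2
  constructor
  · rcases ite_eq_or_eq (ι i) (h/2) 0 with hc | hc <;> rw [hc] at h1 <;> linarith
  · rcases ite_eq_or_eq (ι i) (h/2) 0 with hc | hc <;> rw [hc] at h2 <;> linarith

lemma children_disjoint {a : Fin n → ℝ} {h : ℝ} {ι ι' : Fin n → Bool} (hne : ι ≠ ι') :
    Disjoint (hcube (cbase a h ι) (h / 2)) (hcube (cbase a h ι') (h / 2)) := by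
  rcases Function.ne_iff.1 hne with ⟨i, hi⟩
  rw [Set.disjoint_left]
  intro x hx hx'
  have h1 := hx i (Set.mem_univ i)
  have h2 := hx' i (Set.mem_univ i)
  simp only [cbase, Set.mem_Ico] at h1 h2
  cases hb : ι i <;> cases hb' : ι' i <;>
    simp only [hb, hb', if_true, if_false] at h1 h2 <;> simp_all <;>
    linarith [h1.1, h1.2, h2.1, h2.2]

lemma mem_child_sel {a : Fin n → ℝ} {h : ℝ} {x : Fin n → ℝ} (hx : x ∈ hcube a h) :
    x ∈ hcube (cbase a h fun i => decide (a i + h / 2 ≤ x i)) (h / 2) := by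
  intro i _
  have hxi := hx i (Set.mem_univ i)
  simp only [cbase, Set.mem_Ico, decide_eq_true_eq]
  simp only [Set.mem_Ico] at hxi
  by_cases hc : a i + h / 2 ≤ x i
  · rw [if_pos hc]
    exact ⟨hc, by linarith [hxi.2]⟩
  · rw [if_neg hc]
    push_neg at hc
    simp only [add_zero]
    exact ⟨hxi.1, by linarith⟩

end JN
namespace JN

/-- Descend into dyadic subcubes following a word. -/
def wc : List (Fin n → Bool) → (Fin n → ℝ) × ℝ → (Fin n → ℝ) × ℝ
  | [], p => p
  | ι :: w, p => wc w (cbase p.1 p.2 ι, p.2 / 2)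

/-- The subcube indexed by a word. -/
def wset (p : (Fin n → ℝ) × ℝ) (w : List (Fin n → Bool)) : Set (Fin n → ℝ) :=
  hcube (wc w p).1 (wc w p).2

@[simp] lemma wc_nil (p : (Fin n → ℝ) × ℝ) : wc ([] : List (Fin n → Bool)) p = p := rfl

@[simp] lemma wc_cons (ι : Fin n → Bool) (w : List (Fin n → Bool)) (p) :
    wc (ι :: w) p = wc w (cbase p.1 p.2 ι, p.2 / 2) := rfl

lemma wc_append (w w' : List (Fin n → Bool)) (p) :
    wc (w ++ w') p = wc w' (wc w p) := by
  induction w generalizing p with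
  | nil => simp
  | cons ι t ih => simp [ih]

lemma wc_size (w : List (Fin n → Bool)) (p : (Fin n → ℝ) × ℝ) :
    (wc w p).2 = p.2 / 2 ^ w.length := by
  induction w generalizing p with
  | nil => simp
  | cons ι t ih =>
    rw [wc_cons, ih]
    simp only [List.length_cons, pow_succ]
    ring

lemma wc_size_pos {p : (Fin n → ℝ) × ℝ} (hp : 0 < p.2) (w : List (Fin n → Bool)) :
    0 < (wc w p).2 := by
  rw [wc_size]; positivity

lemma wset_subset {p : (Fin n → ℝ) × ℝ} (hp : 0 < p.2) (w : List (Fin n → Bool)) :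
    wset p w ⊆ hcube p.1 p.2 := by
  induction w generalizing p with
  | nil => exact fun x hx => hx
  | cons ι t ih =>
    refine subset_trans ?_ (child_subset (le_of_lt hp) ι)
    exact ih (p := (cbase p.1 p.2 ι, p.2 / 2)) (by simpa using half_pos hp)

lemma wset_prefix_subset {p : (Fin n → ℝ) × ℝ} (hp : 0 < p.2) {w w' : List (Fin n → Bool)}
    (hw : w <+: w') : wset p w' ⊆ wset p w := by
  rcases hw with ⟨t, rfl⟩
  rw [wset, wc_append]
  exact wset_subset (wc_size_pos hp w) t

lemma wset_disjoint {p : (Fin n → ℝ) × ℝ} (hp : 0 < p.2) :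
    ∀ {w w' : List (Fin n → Bool)}, ¬ w <+: w' → ¬ w' <+: w →
      Disjoint (wset p w) (wset p w') := by
  intro w
  induction w generalizing p with
  | nil => intro w' h1 _; exact absurd (List.nil_prefix) h1
  | cons ι t ih =>
    intro w' h1 h2
    match w' with
    | [] => exact absurd (List.nil_prefix) h2
    | ι' :: t' =>
      by_cases hι : ι = ι'
      · subst hι
        have h1' : ¬ t <+: t' := fun hc => h1 (by simpa [List.cons_prefix_cons] using hc)
        have h2' : ¬ t' <+: t := fun hc => h2 (by simpa [List.cons_prefix_cons] using hc)
        exact ih (p := (cbase p.1 p.2 ι, p.2 / 2)) (by simpa using half_pos hp) h1' h2'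
      · have hd := children_disjoint (a := p.1) (h := p.2) hι
        have s1 : wset p (ι :: t) ⊆ hcube (cbase p.1 p.2 ι) (p.2 / 2) :=
          wset_subset (p := (cbase p.1 p.2 ι, p.2 / 2)) (by simpa using half_pos hp) t
        have s2 : wset p (ι' :: t') ⊆ hcube (cbase p.1 p.2 ι') (p.2 / 2) :=
          wset_subset (p := (cbase p.1 p.2 ι', p.2 / 2)) (by simpa using half_pos hp) t'
        exact Set.disjoint_of_subset s1 s2 hd

/-- The selector of the child containing `x`. -/
def sel (p : (Fin n → ℝ) × ℝ) (x : Fin n → ℝ) : Fin n → Bool :=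
  fun i => decide (p.1 i + p.2 / 2 ≤ x i)

/-- The word of depth `m` of the dyadic subcube of `p` containing `x`. -/
def wordOf (p : (Fin n → ℝ) × ℝ) (x : Fin n → ℝ) : ℕ → List (Fin n → Bool)
  | 0 => []
  | m + 1 => wordOf p x m ++ [sel (wc (wordOf p x m) p) x]

@[simp] lemma wordOf_length (p : (Fin n → ℝ) × ℝ) (x : Fin n → ℝ) (m : ℕ) :
    (wordOf p x m).length = m := by
  induction m with
  | zero => rfl
  | succ m ih => simp [wordOf, ih]

lemma mem_wset_wordOf {p : (Fin n → ℝ) × ℝ} {x : Fin n → ℝ}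
    (hx : x ∈ hcube p.1 p.2) (m : ℕ) : x ∈ wset p (wordOf p x m) := by
  induction m with
  | zero => exact hx
  | succ m ih =>
    rw [wset, wordOf, wc_append]
    exact mem_child_sel ih

lemma wordOf_prefix (p : (Fin n → ℝ) × ℝ) (x : Fin n → ℝ) {m m' : ℕ} (hm : m ≤ m') :
    wordOf p x m <+: wordOf p x m' := by
  induction m' with
  | zero => simp_all
  | succ m' ih =>
    rcases Nat.lt_or_ge m (m' + 1) with hlt | hge
    · exact (ih (Nat.lt_succ_iff.1 hlt)).trans ⟨_, rfl⟩
    · have : m = m' + 1 := le_antisymm hm hge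
      subst this; exact List.prefix_rfl

lemma prefix_wordOf_eq {p : (Fin n → ℝ) × ℝ} {x : Fin n → ℝ} {m : ℕ}
    {v : List (Fin n → Bool)} (hv : v <+: wordOf p x m) : v = wordOf p x v.length := by
  have hlen : v.length ≤ m := by simpa using hv.length_le
  have h2 : wordOf p x v.length <+: wordOf p x m := wordOf_prefix p x hlen
  have := List.prefix_of_prefix_length_le hv h2 (by simp)
  exact this.eq_of_length (by simp)

end JN
namespace JN

/-- Closed cube. -/
def ccube (a : Fin n → ℝ) (h : ℝ) : Set (Fin n → ℝ) :=
  Set.Icc a (a + fun _ => h)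

lemma ccube_eq_pi (a : Fin n → ℝ) (h : ℝ) :
    ccube a h = Set.pi Set.univ fun i => Set.Icc (a i) (a i + h) := by
  rw [ccube, ← Set.pi_univ_Icc]; rfl

lemma volume_ccube (a : Fin n → ℝ) (h : ℝ) :
    volume (ccube a h) = ENNReal.ofReal h ^ n := by
  rw [ccube_eq_pi, volume_pi_pi]; simp [Real.volume_Icc]

lemma hcube_subset_ccube (a : Fin n → ℝ) (h : ℝ) : hcube a h ⊆ ccube a h := by
  rw [ccube_eq_pi]
  intro x hx i _
  have := hx i (Set.mem_univ i)
  exact ⟨this.1, le_of_lt this.2⟩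

lemma hcube_ae_ccube (a : Fin n → ℝ) (h : ℝ) :
    hcube a h =ᵐ[volume] ccube a h := by
  refine MeasureTheory.ae_eq_of_subset_of_measure_ge (hcube_subset_ccube a h)
    (le_of_eq ?_) (measurableSet_hcube a h).nullMeasurableSet ?_
  · rw [volume_ccube, volume_hcube]
  · rw [volume_ccube]; exact ENNReal.pow_ne_top ENNReal.ofReal_ne_top

lemma ccube_subset_closedBall {a x : Fin n → ℝ} {h : ℝ} (hh : 0 ≤ h)
    (hx : x ∈ ccube a h) : ccube a h ⊆ Metric.closedBall x h := by
  intro y hy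
  rw [Metric.mem_closedBall, dist_pi_le_iff hh]
  intro i
  rw [ccube_eq_pi] at hx hy
  have h1 := hx i (Set.mem_univ i); have h2 := hy i (Set.mem_univ i)
  simp only [Set.mem_Icc] at h1 h2
  rw [Real.dist_eq, abs_sub_le_iff]
  constructor <;> [linarith [h2.1, h1.2]; linarith [h1.1, h2.2]]

lemma interior_ccube_nonempty {a : Fin n → ℝ} {h : ℝ} (hh : 0 < h) :
    (interior (ccube a h)).Nonempty := by
  have hsub : (Set.pi Set.univ fun i => Set.Ioo (a i) (a i + h)) ⊆ interior (ccube a h) := by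
    apply interior_maximal
    · rw [ccube_eq_pi]
      exact Set.pi_mono fun i _ => Set.Ioo_subset_Icc_self
    · exact isOpen_set_pi Set.finite_univ fun i _ => isOpen_Ioo
  refine Set.Nonempty.mono hsub ⟨fun i => a i + h / 2, fun i _ => ?_⟩
  constructor <;> simp <;> linarith

lemma isClosed_ccube (a : Fin n → ℝ) (h : ℝ) : IsClosed (ccube a h) := isClosed_Icc

lemma volume_closedBall_pi (x : Fin n → ℝ) {r : ℝ} (hr : 0 ≤ r) :
    volume (Metric.closedBall x r) = ENNReal.ofReal (2 * r) ^ n := by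
  rw [Real.volume_pi_closedBall x hr, ENNReal.ofReal_pow (by linarith)]
  simp

/-- The Vitali family of closed sets comparable to balls, for constant `6 ^ n`. -/
def vfam (n : ℕ) : VitaliFamily (volume : Measure (Fin n → ℝ)) := by
  refine Vitali.vitaliFamily volume (6 ^ n) fun x => ?_
  refine Filter.Eventually.frequently ?_
  filter_upwards [self_mem_nhdsWithin] with r (hr : r ∈ Set.Ioi (0:ℝ))
  have hr0 : (0:ℝ) ≤ r := le_of_lt hr
  rw [volume_closedBall_pi x (by linarith), volume_closedBall_pi x hr0]
  have : ENNReal.ofReal (2 * (3 * r)) = ENNReal.ofReal 3 * ENNReal.ofReal (2 * r) := by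
    rw [← ENNReal.ofReal_mul (by norm_num)]; ring_nf
  rw [this, mul_pow]
  have h36 : ENNReal.ofReal 3 ≤ 6 := by
    rw [show (6:ℝ≥0∞) = ENNReal.ofReal 6 by simp]
    exact ENNReal.ofReal_le_ofReal (by norm_num)
  calc ENNReal.ofReal 3 ^ n * ENNReal.ofReal (2 * r) ^ n
      ≤ 6 ^ n * ENNReal.ofReal (2 * r) ^ n :=
        mul_le_mul_left (pow_le_pow_left' h36 n) _
    _ = ((6 ^ n : NNReal) : ℝ≥0∞) * ENNReal.ofReal (2 * r) ^ n := by
        norm_cast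

lemma ccube_mem_setsAt {a x : Fin n → ℝ} {h : ℝ} (hh : 0 < h) (hx : x ∈ ccube a h) :
    ccube a h ∈ (vfam n).setsAt x := by
  refine ⟨isClosed_ccube a h, interior_ccube_nonempty hh, h, ccube_subset_closedBall hh.le hx, ?_⟩
  rw [volume_closedBall_pi x (by linarith), volume_ccube]
  have : ENNReal.ofReal (2 * (3 * h)) = ENNReal.ofReal 6 * ENNReal.ofReal h := by
    rw [← ENNReal.ofReal_mul (by norm_num)]; ring_nf
  rw [this, mul_pow]
  have h66 : ENNReal.ofReal 6 ≤ 6 := by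
    rw [show (6:ℝ≥0∞) = ENNReal.ofReal 6 by simp]
  calc ENNReal.ofReal 6 ^ n * ENNReal.ofReal h ^ n
      ≤ 6 ^ n * ENNReal.ofReal h ^ n :=
        mul_le_mul_left (pow_le_pow_left' h66 n) _
    _ = ((6 ^ n : NNReal) : ℝ≥0∞) * ENNReal.ofReal h ^ n := by norm_cast

end JN
namespace JN

lemma integrableOn_hcube {b : (Fin n → ℝ) → ℝ} (hbi : LocallyIntegrable b volume)
    (a : Fin n → ℝ) (h : ℝ) : IntegrableOn b (hcube a h) volume :=
  (hbi.integrableOn_isCompact isCompact_Icc).mono_set (hcube_subset_Icc a h)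

lemma good_null {f : (Fin n → ℝ) → ℝ} (hf : Measurable f) (hf0 : ∀ x, 0 ≤ f x)
    {a : Fin n → ℝ} {h : ℝ} (hh : 0 < h) (hfi : IntegrableOn f (hcube a h))
    {lam : ℝ} (hlam : 0 ≤ lam) :
    volume {x | x ∈ hcube a h ∧
      (∀ m, avgR (wset (a, h) (wordOf (a, h) x m)) f ≤ lam) ∧ lam < f x} = 0 := by
  set p : (Fin n → ℝ) × ℝ := (a, h) with hp
  set F : (Fin n → ℝ) → ℝ≥0∞ := (hcube a h).indicator (fun x => ENNReal.ofReal (f x)) with hF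
  have hFmeas : Measurable F :=
    (ENNReal.measurable_ofReal.comp hf).indicator (measurableSet_hcube a h)
  have hFtop : (∫⁻ x, F x) ≠ ⊤ := by
    rw [hF, lintegral_indicator (measurableSet_hcube a h),
      ← ofReal_integral_eq_lintegral_ofReal hfi (Filter.Eventually.of_forall hf0)]
    exact ENNReal.ofReal_ne_top
  have hae := (vfam n).ae_tendsto_lintegral_div' hFmeas hFtop
  rw [MeasureTheory.ae_iff] at hae
  refine measure_mono_null ?_ hae
  rintro x ⟨hxQ, havg, hlt⟩
  simp only [Set.mem_setOf_eq]
  intro hT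
  set seq : ℕ → Set (Fin n → ℝ) :=
    fun m => ccube (wc (wordOf p x m) p).1 (wc (wordOf p x m) p).2 with hseqdef
  have hsize : ∀ m, (wc (wordOf p x m) p).2 = h / 2 ^ m := fun m => by
    rw [wc_size, wordOf_length]
  have hszpos : ∀ m, 0 < (wc (wordOf p x m) p).2 := fun m => wc_size_pos hh _
  have hxmem : ∀ m, x ∈ wset p (wordOf p x m) := fun m => mem_wset_wordOf hxQ m
  have hseq : Filter.Tendsto seq Filter.atTop ((vfam n).filterAt x) := by
    rw [VitaliFamily.tendsto_filterAt_iff]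
    constructor
    · exact Filter.Eventually.of_forall fun m =>
        ccube_mem_setsAt (hszpos m) (hcube_subset_ccube _ _ (hxmem m))
    · intro e he
      have h0 : Filter.Tendsto (fun m : ℕ => h * (2⁻¹ : ℝ) ^ m) Filter.atTop (nhds 0) := by
        have := _root_.tendsto_pow_atTop_nhds_zero_of_lt_one (r := (2⁻¹:ℝ))
          (by norm_num) (by norm_num)
        simpa using this.const_mul h
      filter_upwards [h0.eventually_lt_const he] with m hm
      refine subset_trans
        (ccube_subset_closedBall (hszpos m).le (hcube_subset_ccube _ _ (hxmem m)))
        (Metric.closedBall_subset_closedBall ?_)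
      rw [hsize m, div_eq_mul_inv, ← inv_pow]
      exact hm.le
  have hquot : ∀ m, (∫⁻ y in seq m, F y) / volume (seq m) ≤ ENNReal.ofReal lam := by
    intro m
    set qa := (wc (wordOf p x m) p).1
    set qh := (wc (wordOf p x m) p).2
    have hqh : 0 < qh := hszpos m
    have hV : volume (seq m) = ENNReal.ofReal qh ^ n := volume_ccube qa qh
    have hVset : wset p (wordOf p x m) = hcube qa qh := rfl
    have hwsub : wset p (wordOf p x m) ⊆ hcube a h := wset_subset hh _
    have e1 : (∫⁻ y in seq m, F y) = ∫⁻ y in hcube qa qh, F y :=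
      (setLIntegral_congr (hcube_ae_ccube qa qh)).symm
    have e2 : (∫⁻ y in hcube qa qh, F y) = ∫⁻ y in hcube qa qh, ENNReal.ofReal (f y) := by
      rw [hF, setLIntegral_indicator (measurableSet_hcube a h)]
      congr 1
      rw [Set.inter_eq_right.2 (hVset ▸ hwsub)]
    have e3 : (∫⁻ y in hcube qa qh, ENNReal.ofReal (f y)) = ENNReal.ofReal (∫ y in hcube qa qh, f y) :=
      (ofReal_integral_eq_lintegral_ofReal ((hfi.mono_set (hVset ▸ hwsub)))
        (Filter.Eventually.of_forall hf0)).symm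
    have hVtR : (volume (hcube qa qh)).toReal = qh ^ n := volume_hcube_toReal qa hqh.le
    have hVpos : 0 < (volume (hcube qa qh)).toReal := by rw [hVtR]; positivity
    have hint : (∫ y in hcube qa qh, f y) ≤ lam * (volume (hcube qa qh)).toReal := by
      have := havg m
      rw [avgR] at this
      calc (∫ y in hcube qa qh, f y)
          = ((∫ y in hcube qa qh, f y) / (volume (hcube qa qh)).toReal) *
              (volume (hcube qa qh)).toReal := by field_simp
        _ ≤ lam * (volume (hcube qa qh)).toReal := by
            exact mul_le_mul_of_nonneg_right this hVpos.le
    have e4 : ENNReal.ofReal (lam * (volume (hcube qa qh)).toReal)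
        = ENNReal.ofReal lam * volume (hcube qa qh) := by
      rw [ENNReal.ofReal_mul hlam, ENNReal.ofReal_toReal (volume_hcube_ne_top qa qh)]
    have hVeq : volume (seq m) = volume (hcube qa qh) := by
      rw [hV, volume_hcube]
    calc (∫⁻ y in seq m, F y) / volume (seq m)
        ≤ (ENNReal.ofReal lam * volume (hcube qa qh)) / volume (seq m) := by
          apply ENNReal.div_le_div_right
          rw [e1, e2, e3, ← e4]
          exact ENNReal.ofReal_le_ofReal hint
      _ = ENNReal.ofReal lam := by
          rw [hVeq, mul_div_assoc, ENNReal.div_self (volume_hcube_ne_zero qa hqh)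
            (volume_hcube_ne_top qa qh), mul_one]
  have hFx : F x ≤ ENNReal.ofReal lam :=
    le_of_tendsto (hT.comp hseq) (Filter.Eventually.of_forall hquot)
  rw [hF, Set.indicator_of_mem hxQ] at hFx
  exact absurd ((ENNReal.ofReal_le_ofReal_iff hlam).1 hFx) (not_le.2 hlt)

end JN
namespace JN

/-- The John–Nirenberg step constant. -/
def bigM (n : ℕ) (ε : ℝ) : ℝ := (2 ^ n + 1) * (4 * ε)

set_option maxHeartbeats 1000000 in
lemma czstep {b : (Fin n → ℝ) → ℝ} (hb : Measurable b) (hbi : LocallyIntegrable b volume)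
    {ε : ℝ} (hε : 0 < ε)
    (hbmo : ∀ (a : Fin n → ℝ) (h : ℝ), 0 < h →
      ∫ x in hcube a h, |b x - avgR (hcube a h) b| ≤ ε * (volume (hcube a h)).toReal)
    {k : ℕ}
    (IH : ∀ (a : Fin n → ℝ) (h : ℝ), 0 < h →
      volume {x | x ∈ hcube a h ∧ (k : ℝ) * bigM n ε < |b x - avgR (hcube a h) b|}
        ≤ (4 : ℝ≥0∞)⁻¹ ^ k * volume (hcube a h))
    (a : Fin n → ℝ) (h : ℝ) (hh : 0 < h) :
      volume {x | x ∈ hcube a h ∧ ((k : ℝ) + 1) * bigM n ε < |b x - avgR (hcube a h) b|}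
        ≤ (4 : ℝ≥0∞)⁻¹ ^ (k + 1) * volume (hcube a h) := by
  set p : (Fin n → ℝ) × ℝ := (a, h) with hp
  have hQV : 0 < (volume (hcube a h)).toReal := by
    rw [volume_hcube_toReal a hh.le]; positivity
  set c := avgR (hcube a h) b with hc
  set f : (Fin n → ℝ) → ℝ := fun x => |b x - c| with hfdef
  have hfm : Measurable f := (hb.sub measurable_const).abs
  have hf0 : ∀ x, 0 ≤ f x := fun x => abs_nonneg _
  have hfQ : IntegrableOn f (hcube a h) :=
    ((integrableOn_hcube hbi a h).sub
      (integrableOn_const (volume_hcube_ne_top a h))).abs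
  set A : List (Fin n → Bool) → ℝ := fun w => avgR (wset p w) f with hA
  set lam := 4 * ε with hlamdef
  have hlam0 : 0 < lam := by positivity
  have hwpos : ∀ w : List (Fin n → Bool), 0 < (wc w p).2 := fun w => wc_size_pos hh w
  have hwV : ∀ w : List (Fin n → Bool), (volume (wset p w)).toReal = (wc w p).2 ^ n :=
    fun w => volume_hcube_toReal _ (hwpos w).le
  have hwVpos : ∀ w : List (Fin n → Bool), 0 < (volume (wset p w)).toReal := fun w => by
    rw [hwV]
    exact pow_pos (hwpos w) n
  have hwVne : ∀ w : List (Fin n → Bool), volume (wset p w) ≠ ⊤ :=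
    fun w => volume_hcube_ne_top _ _
  have hwsub : ∀ w : List (Fin n → Bool), wset p w ⊆ hcube a h := fun w => wset_subset hh w
  have hfw : ∀ w : List (Fin n → Bool), IntegrableOn f (wset p w) :=
    fun w => hfQ.mono_set (hwsub w)
  have hAint : ∀ w : List (Fin n → Bool),
      (∫ x in wset p w, f x) = A w * (volume (wset p w)).toReal := by
    intro w
    simp only [hA, avgR]
    exact (div_mul_cancel₀ _ (hwVpos w).ne').symm
  have hAnil : A [] ≤ ε := by
    have h1 := hbmo a h hh
    have hwnil : wset p [] = hcube a h := rfl
    simp only [hA, avgR, hwnil]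
    rw [div_le_iff₀ hQV]
    exact h1
  -- stopping words
  set S : Set (List (Fin n → Bool)) :=
    {w | lam < A w ∧ ∀ v, v <+: w → v ≠ w → A v ≤ lam} with hS
  have hScount : S.Countable := Set.to_countable S
  have hSdisj : S.PairwiseDisjoint (wset p) := by
    intro w hw w' hw' hne
    apply wset_disjoint hh
    · intro hpre
      exact absurd (hw'.2 w hpre hne) (not_le.2 hw.1)
    · intro hpre
      exact absurd (hw.2 w' hpre hne.symm) (not_le.2 hw'.1)
  set U := ⋃ w ∈ S, wset p w with hU
  have hUvol : volume U = ∑' w : S, volume (wset p w) :=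
    measure_biUnion hScount hSdisj fun w _ => measurableSet_hcube _ _
  have hUsub : U ⊆ hcube a h := by
    rw [hU]
    exact Set.iUnion₂_subset fun w _ => hwsub w
  have hUlint : (∑' w : S, ∫⁻ x in wset p w, ENNReal.ofReal (f x))
      = ∫⁻ x in U, ENNReal.ofReal (f x) := by
    rw [hU, Set.biUnion_eq_iUnion]
    have hpair : Pairwise (Function.onFun Disjoint fun w : ↥S => wset p ↑w) := by
      intro i j hij
      exact hSdisj i.2 j.2 fun hc => hij (Subtype.ext hc)
    exact (lintegral_iUnion (fun w : ↥S => measurableSet_hcube _ _) hpair _).symm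
  have hlow : ∀ w ∈ S, ENNReal.ofReal lam * volume (wset p w)
      ≤ ∫⁻ x in wset p w, ENNReal.ofReal (f x) := by
    intro w hw
    rw [← ofReal_integral_eq_lintegral_ofReal (hfw w) (Filter.Eventually.of_forall hf0)]
    have h2 : lam * (volume (wset p w)).toReal ≤ ∫ x in wset p w, f x := by
      rw [hAint w]
      exact mul_le_mul_of_nonneg_right (le_of_lt hw.1) (hwVpos w).le
    calc ENNReal.ofReal lam * volume (wset p w)
        = ENNReal.ofReal (lam * (volume (wset p w)).toReal) := by
          rw [ENNReal.ofReal_mul hlam0.le, ENNReal.ofReal_toReal (hwVne w)]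
      _ ≤ _ := ENNReal.ofReal_le_ofReal h2
  have hUbound : volume U ≤ 4⁻¹ * volume (hcube a h) := by
    have h1 : ENNReal.ofReal lam * volume U ≤ ENNReal.ofReal ε * volume (hcube a h) := by
      rw [hUvol, ← ENNReal.tsum_mul_left]
      calc ∑' w : S, ENNReal.ofReal lam * volume (wset p w)
          ≤ ∑' w : S, ∫⁻ x in wset p w, ENNReal.ofReal (f x) :=
            ENNReal.tsum_le_tsum fun w => hlow w w.2
        _ = ∫⁻ x in U, ENNReal.ofReal (f x) := hUlint
        _ ≤ ∫⁻ x in hcube a h, ENNReal.ofReal (f x) := lintegral_mono_set hUsub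
        _ = ENNReal.ofReal (∫ x in hcube a h, f x) :=
            (ofReal_integral_eq_lintegral_ofReal hfQ (Filter.Eventually.of_forall hf0)).symm
        _ ≤ ENNReal.ofReal (ε * (volume (hcube a h)).toReal) :=
            ENNReal.ofReal_le_ofReal (hbmo a h hh)
        _ = ENNReal.ofReal ε * volume (hcube a h) := by
            rw [ENNReal.ofReal_mul hε.le, ENNReal.ofReal_toReal (volume_hcube_ne_top a h)]
    have h2 : ENNReal.ofReal lam = 4 * ENNReal.ofReal ε := by
      rw [hlamdef, ENNReal.ofReal_mul (by norm_num)]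
      norm_num
    have hεne : ENNReal.ofReal ε ≠ 0 := by
      simp only [ne_eq, ENNReal.ofReal_eq_zero, not_le]
      exact hε
    have key : 4 * volume U ≤ volume (hcube a h) := by
      rw [h2] at h1
      rw [mul_comm (4 : ℝ≥0∞) (ENNReal.ofReal ε), mul_assoc] at h1
      exact (ENNReal.mul_le_mul_iff_right hεne ENNReal.ofReal_ne_top).1 h1
    calc volume U = 4⁻¹ * (4 * volume U) := by
          rw [← mul_assoc, ENNReal.inv_mul_cancel (by norm_num) (by norm_num), one_mul]
      _ ≤ 4⁻¹ * volume (hcube a h) := mul_le_mul_right key _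
  -- average over stopping cubes is controlled by the parent
  have hAstop : ∀ w ∈ S, A w ≤ 2 ^ n * lam := by
    intro w hw
    have hwne : w ≠ [] := by
      rintro rfl
      exact absurd hw.1 (not_lt.2 (hAnil.trans (by linarith)))
    obtain ⟨v, ι, rfl⟩ : ∃ v ι, w = v ++ [ι] := by
      rcases List.eq_nil_or_concat w with h' | ⟨L, e, h'⟩
      · exact absurd h' hwne
      · exact ⟨L, e, by simpa [List.concat_eq_append] using h'⟩
    have hvpre : v <+: v ++ [ι] := ⟨[ι], rfl⟩
    have hvne : v ≠ v ++ [ι] := by simp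
    have hAv : A v ≤ lam := hw.2 v hvpre hvne
    have hsub : wset p (v ++ [ι]) ⊆ wset p v := wset_prefix_subset hh hvpre
    have hint : (∫ x in wset p (v ++ [ι]), f x) ≤ ∫ x in wset p v, f x :=
      setIntegral_mono_set (hfw v) (Filter.Eventually.of_forall hf0)
        (HasSubset.Subset.eventuallyLE hsub)
    have hsz : (wc (v ++ [ι]) p).2 = (wc v p).2 / 2 := by
      rw [wc_append]
      rfl
    have hVv : (volume (wset p v)).toReal
        = (2 : ℝ) ^ n * (volume (wset p (v ++ [ι]))).toReal := by
      rw [hwV, hwV, hsz, div_pow]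
      field_simp
    have h3 : (∫ x in wset p v, f x) ≤ lam * (volume (wset p v)).toReal := by
      rw [hAint v]
      exact mul_le_mul_of_nonneg_right hAv (hwVpos v).le
    simp only [hA, avgR]
    rw [div_le_iff₀ (hwVpos _)]
    calc (∫ x in wset p (v ++ [ι]), f x) ≤ ∫ x in wset p v, f x := hint
      _ ≤ lam * (volume (wset p v)).toReal := h3
      _ = 2 ^ n * lam * (volume (wset p (v ++ [ι]))).toReal := by rw [hVv]; ring
  -- the averages of b on stopping cubes are close to c
  have hcenter : ∀ w ∈ S, |avgR (wset p w) b - c| ≤ 2 ^ n * lam := by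
    intro w hw
    have hbint : IntegrableOn b (wset p w) :=
      (integrableOn_hcube hbi a h).mono_set (hwsub w)
    have h1 : avgR (wset p w) b - c = avgR (wset p w) (fun x => b x - c) := by
      rw [avgR, avgR, integral_sub hbint
        (integrableOn_const (hwVne w)),
        setIntegral_const, smul_eq_mul, measureReal_def, sub_div,
        mul_comm (volume (wset p w)).toReal c, mul_div_assoc,
        div_self (hwVpos w).ne', mul_one]
    have h2 : |avgR (wset p w) (fun x => b x - c)| ≤ A w := by
      simp only [hA, avgR]
      rw [abs_div, abs_of_nonneg ENNReal.toReal_nonneg]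
      have hineq := MeasureTheory.norm_integral_le_integral_norm
        (μ := volume.restrict (wset p w)) (fun x => b x - c)
      simp only [Real.norm_eq_abs] at hineq
      exact (div_le_div_iff_of_pos_right (hwVpos w)).2 hineq
    rw [h1]
    exact h2.trans (hAstop w hw)
  -- the good set is null
  have hgood : volume ({x | x ∈ hcube a h ∧ lam < f x} \ U) = 0 := by
    refine measure_mono_null ?_ (good_null hfm hf0 hh hfQ hlam0.le)
    rintro x ⟨⟨hxQ, hxf⟩, hxU⟩
    refine ⟨hxQ, ?_, hxf⟩
    by_contra hcon
    push_neg at hcon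
    obtain ⟨m, hm⟩ := hcon
    have hex : ∃ m, lam < A (wordOf p x m) := ⟨m, hm⟩
    have hm0 : lam < A (wordOf p x (Nat.find hex)) := Nat.find_spec hex
    have hmin : ∀ m' < Nat.find hex, A (wordOf p x m') ≤ lam :=
      fun m' hm' => not_lt.1 (Nat.find_min hex hm')
    have hwS : wordOf p x (Nat.find hex) ∈ S := by
      refine ⟨hm0, fun v hv hne => ?_⟩
      have hveq : v = wordOf p x v.length := prefix_wordOf_eq hv
      have hvle : v.length ≤ Nat.find hex := by
        have := hv.length_le
        simpa using this
      have hvlt : v.length < Nat.find hex := by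
        rcases lt_or_eq_of_le hvle with h' | h'
        · exact h'
        · exact absurd (by rw [hveq, h']) hne
      rw [hveq]
      exact hmin _ hvlt
    exact hxU (Set.mem_biUnion hwS (mem_wset_wordOf hxQ (Nat.find hex)))
  -- main inclusion
  have h2n1 : (1 : ℝ) ≤ 2 ^ n := one_le_pow₀ (by norm_num)
  have hMeq : bigM n ε = (2 ^ n + 1) * lam := by rw [bigM, hlamdef]
  have hincl : {x | x ∈ hcube a h ∧ ((k : ℝ) + 1) * bigM n ε < |b x - avgR (hcube a h) b|}
      ⊆ ({x | x ∈ hcube a h ∧ lam < f x} \ U) ∪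
        ⋃ w ∈ S, {y | y ∈ hcube (wc w p).1 (wc w p).2 ∧
          (k : ℝ) * bigM n ε < |b y - avgR (hcube (wc w p).1 (wc w p).2) b|} := by
    rintro x ⟨hxQ, hxf⟩
    have hxf' : ((k : ℝ) + 1) * bigM n ε < f x := hxf
    have hk0 : (0 : ℝ) ≤ (k : ℝ) := Nat.cast_nonneg k
    by_cases hxU : x ∈ U
    · right
      rw [hU] at hxU
      obtain ⟨w, hwS, hxw⟩ := Set.mem_iUnion₂.1 hxU
      refine Set.mem_biUnion hwS ⟨hxw, ?_⟩
      have h4 : |avgR (wset p w) b - c| ≤ 2 ^ n * lam := hcenter w hwS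
      have htri : f x ≤ |b x - avgR (wset p w) b| + |avgR (wset p w) b - c| := by
        simp only [hfdef]
        exact abs_sub_le (b x) (avgR (wset p w) b) c
      have : (k : ℝ) * bigM n ε < |b x - avgR (wset p w) b| := by
        rw [hMeq] at hxf' ⊢
        nlinarith [hlam0]
      exact this
    · left
      have hMpos : 0 < bigM n ε := by rw [hMeq]; nlinarith [hlam0, h2n1]
      have h5 : lam ≤ bigM n ε := by rw [hMeq]; nlinarith [hlam0.le, h2n1]
      have h6 : bigM n ε ≤ ((k : ℝ) + 1) * bigM n ε := by nlinarith [hMpos.le, hk0]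
      exact ⟨⟨hxQ, lt_of_le_of_lt (h5.trans h6) hxf'⟩, hxU⟩
  -- finish
  calc volume {x | x ∈ hcube a h ∧ ((k : ℝ) + 1) * bigM n ε < |b x - avgR (hcube a h) b|}
      ≤ volume (({x | x ∈ hcube a h ∧ lam < f x} \ U) ∪
          ⋃ w ∈ S, {y | y ∈ hcube (wc w p).1 (wc w p).2 ∧
            (k : ℝ) * bigM n ε < |b y - avgR (hcube (wc w p).1 (wc w p).2) b|}) :=
        measure_mono hincl
    _ ≤ volume ({x | x ∈ hcube a h ∧ lam < f x} \ U) +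
        volume (⋃ w ∈ S, {y | y ∈ hcube (wc w p).1 (wc w p).2 ∧
          (k : ℝ) * bigM n ε < |b y - avgR (hcube (wc w p).1 (wc w p).2) b|}) :=
        measure_union_le _ _
    _ = volume (⋃ w ∈ S, {y | y ∈ hcube (wc w p).1 (wc w p).2 ∧
          (k : ℝ) * bigM n ε < |b y - avgR (hcube (wc w p).1 (wc w p).2) b|}) := by
        rw [hgood, zero_add]
    _ ≤ ∑' w : S, volume {y | y ∈ hcube (wc (↑w) p).1 (wc (↑w) p).2 ∧
          (k : ℝ) * bigM n ε < |b y - avgR (hcube (wc (↑w) p).1 (wc (↑w) p).2) b|} :=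
        measure_biUnion_le volume hScount _
    _ ≤ ∑' w : S, (4 : ℝ≥0∞)⁻¹ ^ k * volume (wset p (↑w)) :=
        ENNReal.tsum_le_tsum fun w => IH (wc (↑w) p).1 (wc (↑w) p).2 (hwpos (↑w))
    _ = (4 : ℝ≥0∞)⁻¹ ^ k * volume U := by rw [ENNReal.tsum_mul_left, hUvol]
    _ ≤ (4 : ℝ≥0∞)⁻¹ ^ k * (4⁻¹ * volume (hcube a h)) := mul_le_mul_right hUbound _
    _ = (4 : ℝ≥0∞)⁻¹ ^ (k + 1) * volume (hcube a h) := by rw [pow_succ, mul_assoc]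

end JN
namespace JN

lemma level_bound {b : (Fin n → ℝ) → ℝ} (hb : Measurable b) (hbi : LocallyIntegrable b volume)
    {ε : ℝ} (hε : 0 < ε)
    (hbmo : ∀ (a : Fin n → ℝ) (h : ℝ), 0 < h →
      ∫ x in hcube a h, |b x - avgR (hcube a h) b| ≤ ε * (volume (hcube a h)).toReal)
    (k : ℕ) : ∀ (a : Fin n → ℝ) (h : ℝ), 0 < h →
      volume {x | x ∈ hcube a h ∧ (k : ℝ) * bigM n ε < |b x - avgR (hcube a h) b|}
        ≤ (4 : ℝ≥0∞)⁻¹ ^ k * volume (hcube a h) := by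
  induction k with
  | zero =>
    intro a h hh
    calc volume {x | x ∈ hcube a h ∧ ((0 : ℕ) : ℝ) * bigM n ε < |b x - avgR (hcube a h) b|}
        ≤ volume (hcube a h) := measure_mono fun x hx => hx.1
      _ = (4 : ℝ≥0∞)⁻¹ ^ 0 * volume (hcube a h) := by rw [pow_zero, one_mul]
  | succ k IH =>
    intro a h hh
    simpa only [Nat.cast_succ] using czstep hb hbi hε hbmo IH a h hh

lemma exp_bound {b : (Fin n → ℝ) → ℝ} (hb : Measurable b) (hbi : LocallyIntegrable b volume)
    {ε : ℝ} (hε : 0 < ε) (hM : bigM n ε ≤ 1 / 10)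
    (hbmo : ∀ (a : Fin n → ℝ) (h : ℝ), 0 < h →
      ∫ x in hcube a h, |b x - avgR (hcube a h) b| ≤ ε * (volume (hcube a h)).toReal)
    (a : Fin n → ℝ) (h : ℝ) (hh : 0 < h) :
    (∫⁻ x in hcube a h, ENNReal.ofReal (Real.exp |b x - avgR (hcube a h) b|))
      ≤ 2 * volume (hcube a h) := by
  have h2n1 : (1 : ℝ) ≤ 2 ^ n := one_le_pow₀ (by norm_num)
  set M := bigM n ε with hMdef
  have hM0 : 0 < M := by rw [hMdef, bigM]; nlinarith
  set c := avgR (hcube a h) b with hc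
  set f : (Fin n → ℝ) → ℝ := fun x => |b x - c| with hfdef
  have hfm : Measurable f := (hb.sub measurable_const).abs
  have hf0 : ∀ x, 0 ≤ f x := fun x => abs_nonneg _
  -- exp M ≤ 6/5
  have hr1 : (1 : ℝ) ≤ Real.exp M := Real.one_le_exp hM0.le
  have hr : Real.exp M ≤ 6 / 5 := by
    have h9 : (9 / 10 : ℝ) ≤ Real.exp (-(1 / 10)) := by
      have := Real.add_one_le_exp (-(1 / 10) : ℝ)
      linarith
    have hpos : (0 : ℝ) < 9 / 10 := by norm_num
    have hinv : (Real.exp (-(1 / 10)))⁻¹ ≤ (9 / 10 : ℝ)⁻¹ :=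
      inv_anti₀ hpos h9
    rw [← Real.exp_neg, neg_neg] at hinv
    calc Real.exp M ≤ Real.exp (1 / 10) := Real.exp_le_exp.2 hM
      _ ≤ (9 / 10 : ℝ)⁻¹ := hinv
      _ ≤ 6 / 5 := by norm_num
  -- the level sets
  set E : ℕ → Set (Fin n → ℝ) :=
    fun k => {y | y ∈ hcube a h ∧ ((k : ℝ) + 1) * M < f y} with hE
  have hEmeas : ∀ k, MeasurableSet (E k) := fun k =>
    (measurableSet_hcube a h).inter (measurableSet_lt measurable_const hfm)
  have hEvol : ∀ k, volume (E k) ≤ (4 : ℝ≥0∞)⁻¹ ^ (k + 1) * volume (hcube a h) := by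
    intro k
    have := level_bound hb hbi hε hbmo (k + 1) a h hh
    simpa only [Nat.cast_succ] using this
  -- pointwise bound
  have hpt : ∀ x ∈ hcube a h, ENNReal.ofReal (Real.exp (f x)) ≤
      ENNReal.ofReal (Real.exp M) +
        ∑' k : ℕ, ENNReal.ofReal (Real.exp (((k : ℝ) + 2) * M)) *
          Set.indicator (E k) 1 x := by
    intro x hx
    by_cases hfx : f x ≤ M
    · calc ENNReal.ofReal (Real.exp (f x)) ≤ ENNReal.ofReal (Real.exp M) :=
            ENNReal.ofReal_le_ofReal (Real.exp_le_exp.2 hfx)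
        _ ≤ _ := le_self_add
    · push_neg at hfx
      have hex : ∃ j : ℕ, f x ≤ ((j : ℝ) + 1) * M := by
        obtain ⟨j, hj⟩ := exists_nat_ge (f x / M)
        refine ⟨j, ?_⟩
        have : f x / M ≤ (j : ℝ) + 1 := hj.trans (by linarith)
        calc f x = f x / M * M := by field_simp
          _ ≤ ((j : ℝ) + 1) * M := mul_le_mul_of_nonneg_right this hM0.le
      have hj0 : Nat.find hex ≠ 0 := by
        intro h0
        have := Nat.find_spec hex
        rw [h0] at this
        simp only [Nat.cast_zero, zero_add, one_mul] at this
        exact absurd this (not_le.2 hfx)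
      obtain ⟨k, hk⟩ := Nat.exists_eq_succ_of_ne_zero hj0
      have hup : f x ≤ ((k : ℝ) + 2) * M := by
        have := Nat.find_spec hex
        rw [hk] at this
        push_cast at this
        linarith
      have hlow : ((k : ℝ) + 1) * M < f x := by
        have := Nat.find_min hex (m := k) (by omega)
        push_neg at this
        exact this
      have hxE : x ∈ E k := ⟨hx, hlow⟩
      calc ENNReal.ofReal (Real.exp (f x))
          ≤ ENNReal.ofReal (Real.exp (((k : ℝ) + 2) * M)) :=
            ENNReal.ofReal_le_ofReal (Real.exp_le_exp.2 hup)
        _ = ENNReal.ofReal (Real.exp (((k : ℝ) + 2) * M)) * Set.indicator (E k) 1 x := by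
            rw [Set.indicator_of_mem hxE, Pi.one_apply, mul_one]
        _ ≤ ∑' k : ℕ, ENNReal.ofReal (Real.exp (((k : ℝ) + 2) * M)) *
              Set.indicator (E k) 1 x := ENNReal.le_tsum k
        _ ≤ _ := le_add_self
  -- integrate
  have hint : (∫⁻ x in hcube a h, ENNReal.ofReal (Real.exp (f x)))
      ≤ ENNReal.ofReal (Real.exp M) * volume (hcube a h) +
        ∑' k : ℕ, ENNReal.ofReal (Real.exp (((k : ℝ) + 2) * M)) * volume (E k) := by
    have step1 : (∫⁻ x in hcube a h, ENNReal.ofReal (Real.exp (f x)))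
        ≤ ∫⁻ x in hcube a h, (ENNReal.ofReal (Real.exp M) +
            ∑' k : ℕ, ENNReal.ofReal (Real.exp (((k : ℝ) + 2) * M)) *
              Set.indicator (E k) 1 x) := by
      refine setLIntegral_mono' (measurableSet_hcube a h) ?_
      intro x hx
      exact hpt x hx
    refine step1.trans ?_
    rw [lintegral_add_left measurable_const]
    rw [lintegral_const]
    rw [Measure.restrict_apply_univ]
    rw [lintegral_tsum]
    · refine add_le_add_right (ENNReal.tsum_le_tsum fun k => ?_) _
      rw [lintegral_const_mul _ (measurable_one.indicator (hEmeas k))]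
      refine mul_le_mul_right ?_ _
      rw [lintegral_indicator_one (hEmeas k)]
      rw [Measure.restrict_apply (hEmeas k)]
      exact measure_mono Set.inter_subset_left
    · intro k
      exact ((measurable_one.indicator (hEmeas k)).const_mul _).aemeasurable
  -- sum the series
  have hseries : (∑' k : ℕ, ENNReal.ofReal (Real.exp (((k : ℝ) + 2) * M)) * volume (E k))
      ≤ ENNReal.ofReal (18 / 35) * volume (hcube a h) := by
    calc (∑' k : ℕ, ENNReal.ofReal (Real.exp (((k : ℝ) + 2) * M)) * volume (E k))
        ≤ ∑' k : ℕ, ENNReal.ofReal ((9 / 25) * (3 / 10) ^ k) * volume (hcube a h) := by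
          refine ENNReal.tsum_le_tsum fun k => ?_
          have e1 : Real.exp (((k : ℝ) + 2) * M) = Real.exp M ^ (k + 2) := by
            rw [show ((k : ℝ) + 2) = ((k + 2 : ℕ) : ℝ) by push_cast; ring]
            exact Real.exp_nat_mul M (k + 2)
          have e2 : Real.exp M ^ (k + 2) ≤ (6 / 5 : ℝ) ^ (k + 2) :=
            pow_le_pow_left₀ (Real.exp_nonneg M) hr (k + 2)
          have e3 : (4 : ℝ≥0∞)⁻¹ ^ (k + 1) = ENNReal.ofReal ((1 / 4 : ℝ) ^ (k + 1)) := by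
            rw [ENNReal.ofReal_pow (by norm_num)]
            congr 1
            rw [show (1 / 4 : ℝ) = (4 : ℝ)⁻¹ by norm_num,
              ENNReal.ofReal_inv_of_pos (by norm_num)]
            norm_num
          calc ENNReal.ofReal (Real.exp (((k : ℝ) + 2) * M)) * volume (E k)
              ≤ ENNReal.ofReal ((6 / 5 : ℝ) ^ (k + 2)) *
                  ((4 : ℝ≥0∞)⁻¹ ^ (k + 1) * volume (hcube a h)) := by
                refine mul_le_mul ?_ (hEvol k) zero_le zero_le
                rw [e1]
                exact ENNReal.ofReal_le_ofReal e2
            _ = (ENNReal.ofReal ((6 / 5 : ℝ) ^ (k + 2)) *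
                  ENNReal.ofReal ((1 / 4 : ℝ) ^ (k + 1))) * volume (hcube a h) := by
                rw [e3, mul_assoc]
            _ = ENNReal.ofReal ((6 / 5 : ℝ) ^ (k + 2) * (1 / 4 : ℝ) ^ (k + 1)) *
                  volume (hcube a h) := by
                rw [ENNReal.ofReal_mul (by positivity)]
            _ = ENNReal.ofReal ((9 / 25) * (3 / 10) ^ k) * volume (hcube a h) := by
                congr 1
                rw [show (3 / 10 : ℝ) = (6 / 5) * (1 / 4) by norm_num, mul_pow,
                  pow_add, pow_add]
                ring
      _ = (∑' k : ℕ, ENNReal.ofReal ((9 / 25) * (3 / 10) ^ k)) * volume (hcube a h) :=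
          ENNReal.tsum_mul_right
      _ = ENNReal.ofReal (∑' k : ℕ, (9 / 25) * (3 / 10 : ℝ) ^ k) * volume (hcube a h) := by
          rw [ENNReal.ofReal_tsum_of_nonneg (fun k => by positivity)]
          exact (summable_geometric_of_lt_one (by norm_num) (by norm_num)).mul_left _
      _ = ENNReal.ofReal ((9 / 25) * (10 / 7)) * volume (hcube a h) := by
          rw [tsum_mul_left, tsum_geometric_of_lt_one (by norm_num) (by norm_num)]
          norm_num
      _ = ENNReal.ofReal (18 / 35) * volume (hcube a h) := by norm_num
  calc (∫⁻ x in hcube a h, ENNReal.ofReal (Real.exp |b x - avgR (hcube a h) b|))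
      ≤ ENNReal.ofReal (Real.exp M) * volume (hcube a h) +
        ∑' k : ℕ, ENNReal.ofReal (Real.exp (((k : ℝ) + 2) * M)) * volume (E k) := hint
    _ ≤ ENNReal.ofReal (6 / 5) * volume (hcube a h) +
        ENNReal.ofReal (18 / 35) * volume (hcube a h) :=
        add_le_add (mul_le_mul_left (ENNReal.ofReal_le_ofReal hr) _) hseries
    _ = (ENNReal.ofReal (6 / 5) + ENNReal.ofReal (18 / 35)) * volume (hcube a h) := by
        rw [add_mul]
    _ ≤ 2 * volume (hcube a h) := by
        refine mul_le_mul_left ?_ _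
        rw [← ENNReal.ofReal_add (by norm_num) (by norm_num)]
        calc ENNReal.ofReal (6 / 5 + 18 / 35) ≤ ENNReal.ofReal 2 :=
            ENNReal.ofReal_le_ofReal (by norm_num)
          _ = 2 := by norm_num

end JN
namespace JN

lemma avgR_ccube_eq {n : ℕ} (g : (Fin n → ℝ) → ℝ) (a : Fin n → ℝ) (h : ℝ) :
    avgR (ccube a h) g = avgR (hcube a h) g := by
  rw [avgR, avgR, setIntegral_congr_set (hcube_ae_ccube a h).symm, volume_ccube, volume_hcube]

lemma lint_ccube_eq {n : ℕ} (g : (Fin n → ℝ) → ℝ≥0∞) (a : Fin n → ℝ) (h : ℝ) :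
    (∫⁻ x in ccube a h, g x) = ∫⁻ x in hcube a h, g x :=
  setLIntegral_congr (hcube_ae_ccube a h).symm

end JN

theorem exp_john_nirenberg' (n : ℕ) :
    ∃ ε : ℝ, 0 < ε ∧
      ∀ b : (Fin n → ℝ) → ℝ, MeasureTheory.LocallyIntegrable b volume →
        bmoNorm n b ≤ ENNReal.ofReal ε →
        ∀ Q : Set (Fin n → ℝ), IsCube Q →
          (avgL Q fun x => ENNReal.ofReal (Real.exp |b x - avgR Q b|)) ≤ 2 := by
  classical
  refine ⟨(40 * (2 ^ n + 1))⁻¹, by positivity, ?_⟩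
  intro b hbi hbmo Q hQ
  obtain ⟨a, h, hh, rfl⟩ := hQ
  set ε : ℝ := (40 * (2 ^ n + 1))⁻¹ with hεdef
  have hε : 0 < ε := by positivity
  have h2n1 : (0 : ℝ) < 2 ^ n + 1 := by positivity
  have hMε : JN.bigM n ε ≤ 1 / 10 := by
    rw [JN.bigM, hεdef]
    rw [show (2 ^ n + 1 : ℝ) * (4 * (40 * (2 ^ n + 1))⁻¹) = 1 / 10 by field_simp; ring]
  -- measurable representative
  have hsm := hbi.aestronglyMeasurable
  set b' : (Fin n → ℝ) → ℝ := hsm.mk b with hb'def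
  have hb'm : Measurable b' := hsm.stronglyMeasurable_mk.measurable
  have hbeq : b =ᵐ[volume] b' := hsm.ae_eq_mk
  have hb'i : LocallyIntegrable b' volume := by
    intro x
    obtain ⟨s, hs, hint⟩ := hbi x
    exact ⟨s, hs, hint.congr_fun_ae (MeasureTheory.ae_restrict_of_ae hbeq)⟩
  have havg : ∀ s : Set (Fin n → ℝ), avgR s b = avgR s b' := fun s => by
    rw [avgR, avgR, integral_congr_ae (MeasureTheory.ae_restrict_of_ae hbeq)]
  -- BMO transfer to half-open cubes and b'
  have hbmo' : ∀ (a₀ : Fin n → ℝ) (h₀ : ℝ), 0 < h₀ →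
      ∫ x in JN.hcube a₀ h₀, |b' x - avgR (JN.hcube a₀ h₀) b'|
        ≤ ε * (volume (JN.hcube a₀ h₀)).toReal := by
    intro a₀ h₀ hh₀
    have hQc : Set.Icc a₀ (a₀ + fun _ => h₀) = JN.ccube a₀ h₀ := rfl
    have hVne : volume (JN.hcube a₀ h₀) ≠ 0 := JN.volume_hcube_ne_zero a₀ hh₀
    have hVnt : volume (JN.hcube a₀ h₀) ≠ ⊤ := JN.volume_hcube_ne_top a₀ h₀
    have hVcc : volume (Set.Icc a₀ (a₀ + fun _ => h₀)) = volume (JN.hcube a₀ h₀) := by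
      rw [hQc, JN.volume_ccube, JN.volume_hcube]
    have hle : (∫⁻ x in Set.Icc a₀ (a₀ + fun _ => h₀),
        (‖b x - avgR (Set.Icc a₀ (a₀ + fun _ => h₀)) b‖₊ : ℝ≥0∞)) /
        volume (Set.Icc a₀ (a₀ + fun _ => h₀)) ≤ ENNReal.ofReal ε := by
      refine le_trans ?_ hbmo
      unfold bmoNorm
      exact le_iSup_of_le (Set.Icc a₀ (a₀ + fun _ => h₀))
        (le_iSup_of_le ⟨a₀, h₀, hh₀, rfl⟩ (le_refl _))
    have h2 : (∫⁻ x in Set.Icc a₀ (a₀ + fun _ => h₀),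
        (‖b x - avgR (Set.Icc a₀ (a₀ + fun _ => h₀)) b‖₊ : ℝ≥0∞))
        ≤ ENNReal.ofReal ε * volume (JN.hcube a₀ h₀) := by
      rw [← hVcc]
      refine (ENNReal.div_le_iff_le_mul (Or.inl ?_) (Or.inl ?_)).1 hle
      · rw [hVcc]; exact hVne
      · rw [hVcc]; exact hVnt
    -- averages agree
    have hCeq : avgR (Set.Icc a₀ (a₀ + fun _ => h₀)) b = avgR (JN.hcube a₀ h₀) b' := by
      rw [hQc, JN.avgR_ccube_eq, havg]
    -- move the lintegral to the half-open cube and to b'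
    have h3 : (∫⁻ x in JN.hcube a₀ h₀, (‖b' x - avgR (JN.hcube a₀ h₀) b'‖₊ : ℝ≥0∞))
        ≤ ENNReal.ofReal ε * volume (JN.hcube a₀ h₀) := by
      refine le_trans (le_of_eq ?_) h2
      rw [hQc, JN.lint_ccube_eq]
      refine lintegral_congr_ae (MeasureTheory.ae_restrict_of_ae ?_)
      filter_upwards [hbeq] with x hx
      rw [hx, JN.avgR_ccube_eq, havg]
    -- convert to a real integral
    have hnn : 0 ≤ᵐ[volume.restrict (JN.hcube a₀ h₀)]
        fun x => |b' x - avgR (JN.hcube a₀ h₀) b'| :=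
      Filter.Eventually.of_forall fun x => abs_nonneg _
    have hm : AEStronglyMeasurable (fun x => |b' x - avgR (JN.hcube a₀ h₀) b'|)
        (volume.restrict (JN.hcube a₀ h₀)) :=
      ((hb'm.sub measurable_const).abs).aestronglyMeasurable
    rw [MeasureTheory.integral_eq_lintegral_of_nonneg_ae hnn hm]
    have h4 : (∫⁻ x in JN.hcube a₀ h₀, ENNReal.ofReal |b' x - avgR (JN.hcube a₀ h₀) b'|)
        ≤ ENNReal.ofReal ε * volume (JN.hcube a₀ h₀) := by
      refine le_trans (le_of_eq (lintegral_congr fun x => ?_)) h3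
      exact (Real.enorm_eq_ofReal_abs _).symm
    calc (∫⁻ x in JN.hcube a₀ h₀, ENNReal.ofReal |b' x - avgR (JN.hcube a₀ h₀) b'|).toReal
        ≤ (ENNReal.ofReal ε * volume (JN.hcube a₀ h₀)).toReal :=
          ENNReal.toReal_mono (ENNReal.mul_ne_top ENNReal.ofReal_ne_top hVnt) h4
      _ = ε * (volume (JN.hcube a₀ h₀)).toReal := by
          rw [ENNReal.toReal_mul, ENNReal.toReal_ofReal hε.le]
  -- apply the main estimate
  have hfinal := JN.exp_bound hb'm hb'i hε hMε hbmo' a h hh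
  have hQc : Set.Icc a (a + fun _ => h) = JN.ccube a h := rfl
  have hCeq : avgR (Set.Icc a (a + fun _ => h)) b = avgR (JN.hcube a h) b' := by
    rw [hQc, JN.avgR_ccube_eq, havg]
  have hnum : (∫⁻ x in Set.Icc a (a + fun _ => h),
      ENNReal.ofReal (Real.exp |b x - avgR (Set.Icc a (a + fun _ => h)) b|))
      ≤ 2 * volume (Set.Icc a (a + fun _ => h)) := by
    have e1 : (∫⁻ x in Set.Icc a (a + fun _ => h),
        ENNReal.ofReal (Real.exp |b x - avgR (Set.Icc a (a + fun _ => h)) b|))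
        = ∫⁻ x in JN.hcube a h, ENNReal.ofReal (Real.exp |b' x - avgR (JN.hcube a h) b'|) := by
      rw [hQc, JN.lint_ccube_eq]
      refine lintegral_congr_ae (MeasureTheory.ae_restrict_of_ae ?_)
      filter_upwards [hbeq] with x hx
      rw [hx, JN.avgR_ccube_eq, havg]
    have e2 : volume (Set.Icc a (a + fun _ => h)) = volume (JN.hcube a h) := by
      rw [hQc, JN.volume_ccube, JN.volume_hcube]
    rw [e1, e2]
    exact hfinal
  rw [avgL]
  exact ENNReal.div_le_of_le_mul hnum

/-- **Exponential John–Nirenberg inequality.** There is `ε_n > 0` such that any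
real-valued locally integrable `b` with `‖b‖_{BMO} ≤ ε_n` satisfies
`⨍_Q e^{|b - ⟨b⟩_Q|} ≤ 2` on every cube `Q`. -/
theorem exp_john_nirenberg (n : ℕ) :
    ∃ ε : ℝ, 0 < ε ∧
      ∀ b : (Fin n → ℝ) → ℝ, MeasureTheory.LocallyIntegrable b volume →
        bmoNorm n b ≤ ENNReal.ofReal ε →
        ∀ Q : Set (Fin n → ℝ), IsCube Q →
          (avgL Q fun x => ENNReal.ofReal (Real.exp |b x - avgR Q b|)) ≤ 2 := by
  exact exp_john_nirenberg' n

end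
end

section
/- There is a constant $\varepsilon_n>0$, depending only on the dimension $n$, such that if $b$ is a real-valued locally integrable function on $\mathbb{R}^n$ with $\|b\|_{BMO}<\infty$ and $s\in\mathbb{R}$ satisfies $|s|\,\|b\|_{BMO}\le \varepsilon_n$, then for every cube $Q\subset\mathbb{R}^n$, $\frac{1}{|Q|}\int_Q e^{s(b-\langle b\rangle_Q)}\,dx\le 2$. -/
open MeasureTheory ENNReal

noncomputable section

namespace JN
open Metric Set Filter
variable {n : ℕ}

def cube (z : Fin n → ℝ) (r : ℝ) : Set (Fin n → ℝ) := Set.pi Set.univ fun i => Set.Ico (z i) (z i + r)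

def childc (z : Fin n → ℝ) (r : ℝ) (t : Fin n → Bool) : Fin n → ℝ := fun i => z i + if t i then r / 2 else 0

def tsel (z : Fin n → ℝ) (r : ℝ) (x : Fin n → ℝ) : Fin n → Bool := fun i => decide (z i + r / 2 ≤ x i)

lemma mem_cube {z : Fin n → ℝ} {r : ℝ} {x : Fin n → ℝ} :
    x ∈ cube z r ↔ ∀ i, z i ≤ x i ∧ x i < z i + r := by
  simp [cube, Set.mem_pi]

lemma measurableSet_cube (z : Fin n → ℝ) (r : ℝ) : MeasurableSet (cube z r) :=
  MeasurableSet.univ_pi fun i => measurableSet_Ico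

lemma volume_cube (z : Fin n → ℝ) {r : ℝ} (hr : 0 ≤ r) :
    volume (cube z r) = ENNReal.ofReal (r ^ n) := by
  rw [cube, volume_pi_pi]
  simp [Real.volume_Ico, ← ENNReal.ofReal_pow hr]

lemma cube_subset_Icc (z : Fin n → ℝ) (r : ℝ) :
    cube z r ⊆ Set.Icc z (z + fun _ => r) := by
  intro x hx
  rw [mem_cube] at hx
  rw [← Set.pi_univ_Icc]
  intro i _
  exact ⟨(hx i).1, le_of_lt (hx i).2⟩

lemma volume_Icc' (z : Fin n → ℝ) {r : ℝ} (hr : 0 ≤ r) :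
    volume (Set.Icc z (z + fun _ => r)) = ENNReal.ofReal (r ^ n) := by
  rw [← Set.pi_univ_Icc, volume_pi_pi]
  simp [Real.volume_Icc, ← ENNReal.ofReal_pow hr]

lemma cube_ae_Icc (z : Fin n → ℝ) {r : ℝ} (hr : 0 ≤ r) :
    cube z r =ᵐ[volume] Set.Icc z (z + fun _ => r) := by
  rw [MeasureTheory.ae_eq_set]
  constructor
  · rw [Set.diff_eq_empty.2 (cube_subset_Icc z r)]; simp
  · have := measure_diff (cube_subset_Icc z r) (measurableSet_cube z r).nullMeasurableSet
      (by rw [volume_cube z hr]; exact ofReal_ne_top)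
    rw [this, volume_Icc' z hr, volume_cube z hr, tsub_self]

lemma tsel_true {z : Fin n → ℝ} {r : ℝ} {x : Fin n → ℝ} {i : Fin n} :
    tsel z r x i = true ↔ z i + r / 2 ≤ x i := by simp [tsel]
lemma tsel_false {z : Fin n → ℝ} {r : ℝ} {x : Fin n → ℝ} {i : Fin n} :
    tsel z r x i = false ↔ x i < z i + r / 2 := by simp [tsel]
lemma childc_true {z : Fin n → ℝ} {r : ℝ} {t : Fin n → Bool} {i : Fin n} (h : t i = true) :
    childc z r t i = z i + r / 2 := by simp [childc, h]
lemma childc_false {z : Fin n → ℝ} {r : ℝ} {t : Fin n → Bool} {i : Fin n} (h : t i = false) :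
    childc z r t i = z i := by simp [childc, h]

lemma mem_child_iff {z : Fin n → ℝ} {r : ℝ} (hr : 0 < r) {t : Fin n → Bool} {x : Fin n → ℝ} :
    x ∈ cube (childc z r t) (r / 2) ↔ x ∈ cube z r ∧ tsel z r x = t := by
  constructor
  · intro hmem
    rw [mem_cube] at hmem
    constructor
    · rw [mem_cube]
      intro i
      rcases hmem i with ⟨h1, h2⟩
      cases ht : t i
      · rw [childc_false ht] at h1 h2; constructor <;> linarith
      · rw [childc_true ht] at h1 h2; constructor <;> linarith
    · funext i
      rcases hmem i with ⟨h1, h2⟩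
      cases ht : t i
      · rw [childc_false ht] at h1 h2; rw [tsel_false]; linarith
      · rw [childc_true ht] at h1 h2; rw [tsel_true]; linarith
  · rintro ⟨h, rfl⟩
    rw [mem_cube] at h ⊢
    intro i
    rcases h i with ⟨h1, h2⟩
    cases ht : tsel z r x i
    · rw [tsel_false] at ht; rw [childc_false (by rw [tsel_false]; exact ht)]
      constructor <;> linarith
    · rw [tsel_true] at ht; rw [childc_true (by rw [tsel_true]; exact ht)]
      constructor <;> linarith

lemma child_subset_s8 {z : Fin n → ℝ} {r : ℝ} (hr : 0 < r) (t : Fin n → Bool) :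
    cube (childc z r t) (r / 2) ⊆ cube z r := fun _ hx => ((mem_child_iff hr).1 hx).1

lemma cube_eq_iUnion {z : Fin n → ℝ} {r : ℝ} (hr : 0 < r) :
    cube z r = ⋃ t : Fin n → Bool, cube (childc z r t) (r / 2) := by
  ext x
  simp only [Set.mem_iUnion]
  constructor
  · intro hx; exact ⟨tsel z r x, (mem_child_iff hr).2 ⟨hx, rfl⟩⟩
  · rintro ⟨t, ht⟩; exact ((mem_child_iff hr).1 ht).1

lemma pairwise_disjoint_children {z : Fin n → ℝ} {r : ℝ} (hr : 0 < r) :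
    Pairwise (Function.onFun Disjoint fun t : Fin n → Bool => cube (childc z r t) (r / 2)) := by
  intro t t' htt'
  rw [Function.onFun, Set.disjoint_left]
  intro x hx hx'
  exact htt' (((mem_child_iff hr).1 hx).2.symm.trans ((mem_child_iff hr).1 hx').2)

lemma lintegral_children {z : Fin n → ℝ} {r : ℝ} (hr : 0 < r) (f : (Fin n → ℝ) → ℝ≥0∞) :
    ∫⁻ x in cube z r, f x = ∑ t : Fin n → Bool, ∫⁻ x in cube (childc z r t) (r / 2), f x := by
  rw [cube_eq_iUnion hr, lintegral_iUnion (fun t => measurableSet_cube _ _)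
    (pairwise_disjoint_children hr) f, tsum_fintype]

lemma integral_children {z : Fin n → ℝ} {r : ℝ} (hr : 0 < r) {f : (Fin n → ℝ) → ℝ}
    (hf : IntegrableOn f (cube z r)) :
    ∫ x in cube z r, f x = ∑ t : Fin n → Bool, ∫ x in cube (childc z r t) (r / 2), f x := by
  rw [cube_eq_iUnion hr] at hf ⊢
  rw [integral_iUnion (fun t => measurableSet_cube _ _) (pairwise_disjoint_children hr) hf,
    tsum_fintype]


def avc (b : (Fin n → ℝ) → ℝ) (z : Fin n → ℝ) (r : ℝ) : ℝ := (∫ x in cube z r, b x) / r ^ n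

def Am (b : (Fin n → ℝ) → ℝ) : ℕ → (Fin n → ℝ) → ℝ → (Fin n → ℝ) → ℝ
  | 0, z, r, _ => avc b z r
  | m + 1, z, r, x => Am b m (childc z r (tsel z r x)) (r / 2) x

lemma Am_zero {b : (Fin n → ℝ) → ℝ} {z : Fin n → ℝ} {r : ℝ} {x : Fin n → ℝ} :
    Am b 0 z r x = avc b z r := rfl

lemma Am_succ {b : (Fin n → ℝ) → ℝ} {m : ℕ} {z : Fin n → ℝ} {r : ℝ} {x : Fin n → ℝ} :
    Am b (m + 1) z r x = Am b m (childc z r (tsel z r x)) (r / 2) x := rfl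

lemma measurable_tsel (z : Fin n → ℝ) (r : ℝ) : Measurable (tsel z r) := by
  apply measurable_pi_lambda
  intro i
  apply measurable_to_countable'
  intro y
  cases y
  · have : (fun x : Fin n → ℝ => tsel z r x i) ⁻¹' {false} = {x | x i < z i + r / 2} := by
      ext x; simp [tsel]
    rw [this]
    exact measurableSet_lt (measurable_pi_apply i) measurable_const
  · have : (fun x : Fin n → ℝ => tsel z r x i) ⁻¹' {true} = {x | z i + r / 2 ≤ x i} := by
      ext x; simp [tsel]
    rw [this]
    exact measurableSet_le measurable_const (measurable_pi_apply i)

lemma measurable_Am (b : (Fin n → ℝ) → ℝ) : ∀ (m : ℕ) (z : Fin n → ℝ) (r : ℝ),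
    Measurable (Am b m z r) := by
  intro m
  induction m with
  | zero => intro z r; exact measurable_const
  | succ m ih =>
    intro z r
    have heq : Am b (m + 1) z r = fun x =>
        ∑ t : Fin n → Bool, if tsel z r x = t then Am b m (childc z r t) (r / 2) x else 0 := by
      funext x
      rw [Finset.sum_ite_eq]
      simp [Am_succ]
    rw [heq]
    apply Finset.measurable_sum
    intro t _
    exact Measurable.ite (measurable_tsel z r (MeasurableSet.singleton t)) (ih _ _) measurable_const

lemma integrableOn_cube {b : (Fin n → ℝ) → ℝ} (hb : LocallyIntegrable b volume)
    (z : Fin n → ℝ) (r : ℝ) : IntegrableOn b (cube z r) :=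
  (hb.integrableOn_isCompact isCompact_Icc).mono_set (cube_subset_Icc z r)

lemma integrableOn_const_cube (z : Fin n → ℝ) {r : ℝ} (hr : 0 < r) (c : ℝ) :
    IntegrableOn (fun _ => c) (cube z r) := by
  rw [integrableOn_const_iff]
  right
  rw [volume_cube z hr.le]
  exact ofReal_lt_top

lemma integrableOn_abs_sub {b : (Fin n → ℝ) → ℝ} (hb : LocallyIntegrable b volume)
    (z : Fin n → ℝ) {r : ℝ} (hr : 0 < r) (c : ℝ) :
    IntegrableOn (fun x => |b x - c|) (cube z r) := by
  apply Integrable.abs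
  exact Integrable.sub (integrableOn_cube hb z r) (integrableOn_const_cube z hr c)


lemma integral_sub_avc {b : (Fin n → ℝ) → ℝ} (hb : LocallyIntegrable b volume)
    (z : Fin n → ℝ) {r : ℝ} (hr : 0 < r) (c : ℝ) :
    ∫ x in cube z r, (b x - c) = (avc b z r - c) * r ^ n := by
  have hrn : (0:ℝ) < r ^ n := pow_pos hr n
  rw [integral_sub (integrableOn_cube hb z r) (integrableOn_const_cube z hr c),
    setIntegral_const, measureReal_def, volume_cube z hr.le, ENNReal.toReal_ofReal hrn.le]
  rw [avc, sub_mul, div_mul_cancel₀ _ hrn.ne', smul_eq_mul, mul_comm]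

lemma abs_integral_le {b : (Fin n → ℝ) → ℝ} (hb : LocallyIntegrable b volume)
    {z z' : Fin n → ℝ} {r r' : ℝ} (hr : 0 < r) (hr' : 0 < r') (c : ℝ)
    (hsub : cube z' r' ⊆ cube z r) :
    ∫ x in cube z' r', (b x - c) ≤ ∫ x in cube z r, |b x - c| := by
  calc ∫ x in cube z' r', (b x - c)
      ≤ ∫ x in cube z' r', |b x - c| := by
        exact integral_mono ((integrableOn_cube hb z' r').sub (integrableOn_const_cube z' hr' c))
          (integrableOn_abs_sub hb z' hr' c) (fun x => le_abs_self _)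
    _ ≤ ∫ x in cube z r, |b x - c| := by
        apply setIntegral_mono_set (integrableOn_abs_sub hb z hr c)
          (Filter.Eventually.of_forall fun x => abs_nonneg _)
          (HasSubset.Subset.eventuallyLE hsub)


lemma exp_le_bound {x y : ℝ} (hxy : x ≤ y) (hy : y < 1) : Real.exp x ≤ 1 / (1 - y) := by
  have h2 : 1 - y ≤ Real.exp (-y) := by have := Real.add_one_le_exp (-y); linarith
  have h3 : Real.exp (-y) * Real.exp y = 1 := by rw [← Real.exp_add]; simp
  have h4 := Real.exp_pos y
  have h5 : 0 < 1 - y := by linarith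
  have h6 : Real.exp x ≤ Real.exp y := Real.exp_le_exp.2 hxy
  rw [le_div_iff₀ h5]
  nlinarith

lemma two_pow_pos' : (0:ℝ) < 2 ^ n := by positivity

lemma avc_child_sub {b : (Fin n → ℝ) → ℝ} (hb : LocallyIntegrable b volume) {B : ℝ}
    (HB : ∀ (z : Fin n → ℝ) (r : ℝ), 0 < r → ∫ x in cube z r, |b x - avc b z r| ≤ B * r ^ n)
    (z : Fin n → ℝ) {r : ℝ} (hr : 0 < r) (t : Fin n → Bool) :
    avc b (childc z r t) (r / 2) - avc b z r ≤ 2 ^ n * B := by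
  have hr2 : 0 < r / 2 := half_pos hr
  have h1 := integral_sub_avc hb (childc z r t) hr2 (avc b z r)
  have h2 := abs_integral_le hb (z := z) (z' := childc z r t) hr hr2 (avc b z r) (child_subset_s8 hr t)
  have h3 := HB z r hr
  have hrn : (0:ℝ) < r ^ n := pow_pos hr n
  have hrn2 : (0:ℝ) < (r / 2) ^ n := pow_pos hr2 n
  have h2n : (0:ℝ) < 2 ^ n := two_pow_pos'
  have key : (avc b (childc z r t) (r / 2) - avc b z r) * (r / 2) ^ n ≤ B * r ^ n := by
    rw [← h1]; linarith
  have hpow : (r / 2) ^ n * 2 ^ n = r ^ n := by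
    rw [div_pow]; field_simp
  have k2 : (avc b (childc z r t) (r / 2) - avc b z r) * r ^ n ≤ 2 ^ n * B * r ^ n := by
    have hm := mul_le_mul_of_nonneg_right key h2n.le
    calc (avc b (childc z r t) (r / 2) - avc b z r) * r ^ n
        = (avc b (childc z r t) (r / 2) - avc b z r) * (r / 2) ^ n * 2 ^ n := by
          rw [mul_assoc, hpow]
      _ ≤ B * r ^ n * 2 ^ n := hm
      _ = 2 ^ n * B * r ^ n := by ring
  exact le_of_mul_le_mul_right k2 hrn

lemma cheb {b : (Fin n → ℝ) → ℝ} (hb : LocallyIntegrable b volume)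
    (z : Fin n → ℝ) {r : ℝ} (hr : 0 < r) (c lam : ℝ)
    (hgt : c + lam < avc b z r) :
    lam * r ^ n ≤ ∫ x in cube z r, |b x - c| := by
  have h1 := integral_sub_avc hb z hr c
  have h2 : ∫ x in cube z r, (b x - c) ≤ ∫ x in cube z r, |b x - c| :=
    integral_mono ((integrableOn_cube hb z r).sub (integrableOn_const_cube z hr c))
      (integrableOn_abs_sub hb z hr c) (fun x => le_abs_self _)
  have hrn : (0:ℝ) < r ^ n := pow_pos hr n
  nlinarith

section Core

variable {b : (Fin n → ℝ) → ℝ} {s B : ℝ}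

lemma bound_self (hb : LocallyIntegrable b volume) (hB : 0 < B)
    (HB : ∀ (z : Fin n → ℝ) (r : ℝ), 0 < r → ∫ x in cube z r, |b x - avc b z r| ≤ B * r ^ n)
    (z : Fin n → ℝ) {r : ℝ} (hr : 0 < r) :
    (10/9) * r ^ n + (16 / (7 * (4 * 2 ^ n * B))) * ∫ x in cube z r, |b x - avc b z r|
      ≤ 2 * r ^ n := by
  have h2n : (0:ℝ) < 2 ^ n := two_pow_pos'
  have h1 : (1:ℝ) ≤ 2 ^ n := one_le_pow₀ (by norm_num)
  have hrn : (0:ℝ) < r ^ n := pow_pos hr n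
  have hcoeff : (0:ℝ) < 16 / (7 * (4 * 2 ^ n * B)) := by positivity
  have h2 := HB z r hr
  have h3 : (16 / (7 * (4 * 2 ^ n * B))) * ∫ x in cube z r, |b x - avc b z r|
      ≤ (16 / (7 * (4 * 2 ^ n * B))) * (B * r ^ n) :=
    mul_le_mul_of_nonneg_left h2 hcoeff.le
  have h4 : (16 / (7 * (4 * 2 ^ n * B))) * (B * r ^ n) = (4 / (7 * 2 ^ n)) * r ^ n := by
    field_simp; ring
  have h5 : (4 / (7 * 2 ^ n) : ℝ) ≤ 4 / 7 := by
    apply div_le_div_of_nonneg_left (by norm_num) (by norm_num)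
    nlinarith
  nlinarith

lemma aux (hb : LocallyIntegrable b volume) (hs : 0 < s) (hB : 0 < B)
    (hsB : s * B * (4 * 2 ^ n) ≤ 1 / 10)
    (HB : ∀ (z : Fin n → ℝ) (r : ℝ), 0 < r → ∫ x in cube z r, |b x - avc b z r| ≤ B * r ^ n) :
    ∀ (m : ℕ) (z : Fin n → ℝ) (r c : ℝ), 0 < r → avc b z r ≤ c + 4 * 2 ^ n * B →
    ∫⁻ x in cube z r, ENNReal.ofReal (Real.exp (s * (Am b m z r x - c)))
      ≤ ENNReal.ofReal ((10/9) * r ^ n +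
          (16 / (7 * (4 * 2 ^ n * B))) * ∫ x in cube z r, |b x - c|) := by
  have h2n : (0:ℝ) < 2 ^ n := two_pow_pos'
  have h1n : (1:ℝ) ≤ 2 ^ n := one_le_pow₀ (by norm_num)
  intro m
  induction m with
  | zero =>
    intro z r c hr hc
    have hrn : (0:ℝ) < r ^ n := pow_pos hr n
    have h1 : ∫⁻ x in cube z r, ENNReal.ofReal (Real.exp (s * (Am b 0 z r x - c)))
        = ENNReal.ofReal (Real.exp (s * (avc b z r - c))) * volume (cube z r) := by
      simp only [Am_zero]
      exact setLIntegral_const _ _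
    rw [h1, volume_cube z hr.le, ← ENNReal.ofReal_mul (Real.exp_pos _).le]
    apply ENNReal.ofReal_le_ofReal
    have hexp : Real.exp (s * (avc b z r - c)) ≤ 10/9 := by
      have hle : s * (avc b z r - c) ≤ 1/10 := by nlinarith
      calc Real.exp (s * (avc b z r - c)) ≤ 1 / (1 - 1/10) := exp_le_bound hle (by norm_num)
        _ = 10/9 := by norm_num
    have hint : 0 ≤ ∫ x in cube z r, |b x - c| :=
      setIntegral_nonneg (measurableSet_cube z r) fun x _ => abs_nonneg _
    have hcoeff : (0:ℝ) ≤ 16 / (7 * (4 * 2 ^ n * B)) := by positivity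
    nlinarith
  | succ m ih =>
    intro z r c hr hc
    have hr2 : 0 < r / 2 := half_pos hr
    have hrn2 : (0:ℝ) < (r / 2) ^ n := pow_pos hr2 n
    have hchild : ∀ t : Fin n → Bool,
        ∫⁻ x in cube (childc z r t) (r / 2),
            ENNReal.ofReal (Real.exp (s * (Am b m (childc z r t) (r / 2) x - c)))
          ≤ ENNReal.ofReal ((10/9) * (r / 2) ^ n + (16 / (7 * (4 * 2 ^ n * B))) *
              ∫ x in cube (childc z r t) (r / 2), |b x - c|) := by
      intro t
      by_cases hcase : avc b (childc z r t) (r / 2) ≤ c + 4 * 2 ^ n * B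
      · exact ih (childc z r t) (r / 2) c hr2 hcase
      · push_neg at hcase
        have hmain : ∫⁻ x in cube (childc z r t) (r / 2),
            ENNReal.ofReal (Real.exp (s * (Am b m (childc z r t) (r / 2) x
              - avc b (childc z r t) (r / 2))))
            ≤ ENNReal.ofReal (2 * (r / 2) ^ n) := by
          refine le_trans (ih _ _ _ hr2 (by nlinarith)) ?_
          exact ENNReal.ofReal_le_ofReal (bound_self hb hB HB _ hr2)
        have hfact : ∫⁻ x in cube (childc z r t) (r / 2),
            ENNReal.ofReal (Real.exp (s * (Am b m (childc z r t) (r / 2) x - c)))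
            = ENNReal.ofReal (Real.exp (s * (avc b (childc z r t) (r / 2) - c))) *
              ∫⁻ x in cube (childc z r t) (r / 2),
                ENNReal.ofReal (Real.exp (s * (Am b m (childc z r t) (r / 2) x
                  - avc b (childc z r t) (r / 2)))) := by
          rw [← lintegral_const_mul' _ _ ENNReal.ofReal_ne_top]
          apply lintegral_congr
          intro x
          rw [← ENNReal.ofReal_mul (Real.exp_pos _).le, ← Real.exp_add]
          ring_nf
        have hdrift : avc b (childc z r t) (r / 2) - c ≤ 2 ^ n * B + 4 * 2 ^ n * B := by
          have := avc_child_sub hb HB z hr t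
          linarith
        have hexp : Real.exp (s * (avc b (childc z r t) (r / 2) - c)) ≤ 8/7 := by
          have hle : s * (avc b (childc z r t) (r / 2) - c) ≤ 1/8 := by nlinarith
          calc Real.exp _ ≤ 1 / (1 - 1/8) := exp_le_bound hle (by norm_num)
            _ = 8/7 := by norm_num
        have hcheb : (4 * 2 ^ n * B) * (r / 2) ^ n
            ≤ ∫ x in cube (childc z r t) (r / 2), |b x - c| :=
          cheb hb (childc z r t) hr2 c _ hcase
        calc ∫⁻ x in cube (childc z r t) (r / 2),
              ENNReal.ofReal (Real.exp (s * (Am b m (childc z r t) (r / 2) x - c)))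
            = ENNReal.ofReal (Real.exp (s * (avc b (childc z r t) (r / 2) - c))) *
              ∫⁻ x in cube (childc z r t) (r / 2),
                ENNReal.ofReal (Real.exp (s * (Am b m (childc z r t) (r / 2) x
                  - avc b (childc z r t) (r / 2)))) := hfact
          _ ≤ ENNReal.ofReal (8/7) * ENNReal.ofReal (2 * (r / 2) ^ n) :=
              mul_le_mul' (ENNReal.ofReal_le_ofReal hexp) hmain
          _ = ENNReal.ofReal ((8/7) * (2 * (r / 2) ^ n)) := by
              rw [← ENNReal.ofReal_mul (by norm_num)]
          _ ≤ ENNReal.ofReal ((10/9) * (r / 2) ^ n + (16 / (7 * (4 * 2 ^ n * B))) *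
              ∫ x in cube (childc z r t) (r / 2), |b x - c|) := by
              apply ENNReal.ofReal_le_ofReal
              have hcoeff : (0:ℝ) < 16 / (7 * (4 * 2 ^ n * B)) := by positivity
              have h3 : (16 / (7 * (4 * 2 ^ n * B))) * ((4 * 2 ^ n * B) * (r / 2) ^ n)
                  = (16/7) * (r / 2) ^ n := by field_simp
              nlinarith [mul_le_mul_of_nonneg_left hcheb hcoeff.le]
    calc ∫⁻ x in cube z r, ENNReal.ofReal (Real.exp (s * (Am b (m+1) z r x - c)))
        = ∑ t : Fin n → Bool, ∫⁻ x in cube (childc z r t) (r / 2),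
            ENNReal.ofReal (Real.exp (s * (Am b m (childc z r t) (r / 2) x - c))) := by
          rw [lintegral_children hr]
          refine Finset.sum_congr rfl fun t _ => ?_
          apply setLIntegral_congr_fun (measurableSet_cube _ _)
          intro x hx
          dsimp only
          rw [Am_succ, ((mem_child_iff hr).1 hx).2]
      _ ≤ ∑ t : Fin n → Bool, ENNReal.ofReal ((10/9) * (r / 2) ^ n +
            (16 / (7 * (4 * 2 ^ n * B))) * ∫ x in cube (childc z r t) (r / 2), |b x - c|) :=
          Finset.sum_le_sum fun t _ => hchild t
      _ = ENNReal.ofReal (∑ t : Fin n → Bool, ((10/9) * (r / 2) ^ n +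
            (16 / (7 * (4 * 2 ^ n * B))) * ∫ x in cube (childc z r t) (r / 2), |b x - c|)) := by
          rw [ENNReal.ofReal_sum_of_nonneg]
          intro t _
          have hint : 0 ≤ ∫ x in cube (childc z r t) (r / 2), |b x - c| :=
            setIntegral_nonneg (measurableSet_cube _ _) fun x _ => abs_nonneg _
          positivity
      _ = ENNReal.ofReal ((10/9) * r ^ n +
            (16 / (7 * (4 * 2 ^ n * B))) * ∫ x in cube z r, |b x - c|) := by
          congr 1
          rw [Finset.sum_add_distrib, Finset.sum_const, ← Finset.mul_sum,
            ← integral_children hr (integrableOn_abs_sub hb z hr c)]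
          have hcard : (Finset.univ : Finset (Fin n → Bool)).card = 2 ^ n := by
            simp [Finset.card_univ]
          rw [hcard, nsmul_eq_mul]
          push_cast
          rw [div_pow]
          field_simp

lemma main_est (hb : LocallyIntegrable b volume) (hs : 0 < s) (hB : 0 < B)
    (hsB : s * B * (4 * 2 ^ n) ≤ 1 / 10)
    (HB : ∀ (z : Fin n → ℝ) (r : ℝ), 0 < r → ∫ x in cube z r, |b x - avc b z r| ≤ B * r ^ n)
    (m : ℕ) (z : Fin n → ℝ) {r : ℝ} (hr : 0 < r) :
    ∫⁻ x in cube z r, ENNReal.ofReal (Real.exp (s * (Am b m z r x - avc b z r)))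
      ≤ ENNReal.ofReal (2 * r ^ n) := by
  have h2n : (0:ℝ) < 2 ^ n := two_pow_pos'
  refine le_trans (aux hb hs hB hsB HB m z r (avc b z r) hr (by nlinarith)) ?_
  exact ENNReal.ofReal_le_ofReal (bound_self hb hB HB z hr)


end Core

lemma chain {b : (Fin n → ℝ) → ℝ} : ∀ (m : ℕ) (z : Fin n → ℝ) (r : ℝ), 0 < r →
    ∀ x, x ∈ cube z r → ∃ z', x ∈ cube z' (r / 2 ^ m) ∧ cube z' (r / 2 ^ m) ⊆ cube z r ∧
      Am b m z r x = avc b z' (r / 2 ^ m) := by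
  intro m
  induction m with
  | zero =>
    intro z r hr x hx
    exact ⟨z, by simpa using hx, by simp, by simp [Am_zero]⟩
  | succ m ih =>
    intro z r hr x hx
    have hx' : x ∈ cube (childc z r (tsel z r x)) (r / 2) := (mem_child_iff hr).2 ⟨hx, rfl⟩
    obtain ⟨z', hmem, hsub, havg⟩ := ih (childc z r (tsel z r x)) (r / 2) (half_pos hr) x hx'
    have hpow : r / 2 / 2 ^ m = r / 2 ^ (m + 1) := by rw [pow_succ]; ring
    refine ⟨z', ?_, ?_, ?_⟩
    · rwa [← hpow]
    · rw [← hpow]; exact hsub.trans (child_subset_s8 hr _)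
    · rw [Am_succ, havg, hpow]

lemma ae_tendsto {b : (Fin n → ℝ) → ℝ} (hb : LocallyIntegrable b volume)
    (z : Fin n → ℝ) {r : ℝ} (hr : 0 < r) :
    ∀ᵐ x : (Fin n → ℝ), x ∈ cube z r →
      Filter.Tendsto (fun m => Am b m z r x) Filter.atTop (nhds (b x)) := by
  filter_upwards [IsUnifLocDoublingMeasure.ae_tendsto_average
    (μ := (volume : Measure (Fin n → ℝ))) hb 1] with x hx
  intro hxQ
  have hch := fun m => chain (b := b) m z r hr x hxQ
  choose Z h1 h2 h3 using hch
  set δ : ℕ → ℝ := fun m => r / 2 ^ (m + 1) with hδdef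
  set w : ℕ → (Fin n → ℝ) := fun m => fun i => Z m i + δ m with hwdef
  have hδpos : ∀ m, 0 < δ m := fun m => by positivity
  have h2δ : ∀ m, δ m + δ m = r / 2 ^ m := fun m => by
    simp only [hδdef]; rw [pow_succ]; ring
  have hball : ∀ m, Metric.closedBall (w m) (δ m)
      = Set.Icc (Z m) (Z m + fun _ => r / 2 ^ m) := by
    intro m
    ext y
    rw [Metric.mem_closedBall, dist_pi_le_iff (hδpos m).le, ← Set.pi_univ_Icc, Set.mem_univ_pi]
    apply forall_congr'
    intro i
    have hwi : w m i = Z m i + δ m := rfl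
    have haddi : (Z m + fun _ => r / 2 ^ m : Fin n → ℝ) i = Z m i + r / 2 ^ m := rfl
    rw [Real.dist_eq, abs_sub_le_iff, Set.mem_Icc, hwi, haddi]
    constructor
    · rintro ⟨ha, hb'⟩; constructor <;> [linarith; linarith [h2δ m]]
    · rintro ⟨ha, hb'⟩; constructor <;> [linarith [h2δ m]; linarith]
  have hmem' : ∀ m, x ∈ Metric.closedBall (w m) (1 * δ m) := by
    intro m
    rw [one_mul, hball m]
    exact cube_subset_Icc _ _ (h1 m)
  have hδtend : Filter.Tendsto δ Filter.atTop (nhdsWithin 0 (Set.Ioi 0)) := by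
    rw [tendsto_nhdsWithin_iff]
    constructor
    · have h0 : Filter.Tendsto (fun m : ℕ => (r / 2) * (1 / 2) ^ m)
          Filter.atTop (nhds 0) := by
        have hgeo := tendsto_pow_atTop_nhds_zero_of_lt_one
          (by norm_num : (0:ℝ) ≤ 1/2) (by norm_num : (1/2:ℝ) < 1)
        simpa using hgeo.const_mul (r / 2)
      apply h0.congr
      intro m
      show r / 2 * (1 / 2) ^ m = r / 2 ^ (m + 1)
      rw [div_pow, one_pow, pow_succ]
      ring
    · exact Filter.Eventually.of_forall fun m => hδpos m
  have havg : ∀ m, ⨍ y in Metric.closedBall (w m) (δ m), b y = avc b (Z m) (r / 2 ^ m) := by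
    intro m
    have hrm : (0:ℝ) < r / 2 ^ m := by positivity
    rw [hball m, setAverage_eq,
      ← setIntegral_congr_set (cube_ae_Icc (Z m) hrm.le),
      measureReal_def, volume_Icc' (Z m) hrm.le, ENNReal.toReal_ofReal (by positivity), avc,
      smul_eq_mul, inv_mul_eq_div]
  have htend := hx w δ hδtend (Filter.Eventually.of_forall hmem')
  exact htend.congr fun m => (havg m).trans (h3 m).symm

lemma final {b : (Fin n → ℝ) → ℝ} {s B : ℝ} (hb : LocallyIntegrable b volume)
    (hs : 0 < s) (hB : 0 < B) (hsB : s * B * (4 * 2 ^ n) ≤ 1 / 10)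
    (HB : ∀ (z : Fin n → ℝ) (r : ℝ), 0 < r → ∫ x in cube z r, |b x - avc b z r| ≤ B * r ^ n)
    (z : Fin n → ℝ) {r : ℝ} (hr : 0 < r) :
    ∫⁻ x in cube z r, ENNReal.ofReal (Real.exp (s * (b x - avc b z r)))
      ≤ ENNReal.ofReal (2 * r ^ n) := by
  have hae : ∀ᵐ x ∂(volume.restrict (cube z r)),
      Filter.Tendsto (fun m => Am b m z r x) Filter.atTop (nhds (b x)) := by
    rw [ae_restrict_iff' (measurableSet_cube z r)]
    exact ae_tendsto hb z hr
  calc ∫⁻ x in cube z r, ENNReal.ofReal (Real.exp (s * (b x - avc b z r)))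
      ≤ ∫⁻ x in cube z r, Filter.liminf
          (fun m => ENNReal.ofReal (Real.exp (s * (Am b m z r x - avc b z r))))
          Filter.atTop := by
        apply lintegral_mono_ae
        filter_upwards [hae] with x hx
        have h1 := (hx.sub_const (avc b z r)).const_mul s
        have h2 := (Real.continuous_exp.tendsto _).comp h1
        have h3 := (ENNReal.continuous_ofReal.tendsto _).comp h2
        exact le_of_eq h3.liminf_eq.symm
    _ ≤ Filter.liminf (fun m => ∫⁻ x in cube z r,
          ENNReal.ofReal (Real.exp (s * (Am b m z r x - avc b z r)))) Filter.atTop := by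
        apply lintegral_liminf_le'
        intro m
        exact (ENNReal.measurable_ofReal.comp (Real.measurable_exp.comp
          (((measurable_Am b m z r).sub measurable_const).const_mul s))).aemeasurable
    _ ≤ ENNReal.ofReal (2 * r ^ n) := by
        refine le_trans (Filter.liminf_le_liminf
          (Filter.Eventually.of_forall fun m => main_est hb hs hB hsB HB m z hr)) ?_
        simp [Filter.liminf_const]


lemma avc_neg {b : (Fin n → ℝ) → ℝ} (z : Fin n → ℝ) (r : ℝ) :
    avc (fun x => -b x) z r = -avc b z r := by
  rw [avc, avc, integral_neg, neg_div]

lemma final_abs {b : (Fin n → ℝ) → ℝ} {s B : ℝ} (hb : LocallyIntegrable b volume)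
    (hs : s ≠ 0) (hB : 0 < B) (hsB : |s| * B * (4 * 2 ^ n) ≤ 1 / 10)
    (HB : ∀ (z : Fin n → ℝ) (r : ℝ), 0 < r → ∫ x in cube z r, |b x - avc b z r| ≤ B * r ^ n)
    (z : Fin n → ℝ) {r : ℝ} (hr : 0 < r) :
    ∫⁻ x in cube z r, ENNReal.ofReal (Real.exp (s * (b x - avc b z r)))
      ≤ ENNReal.ofReal (2 * r ^ n) := by
  rcases lt_or_gt_of_ne hs with hneg | hpos
  · have habs : |s| = -s := abs_of_neg hneg
    rw [habs] at hsB
    have HB' : ∀ (z' : Fin n → ℝ) (r' : ℝ), 0 < r' →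
        ∫ x in cube z' r', |(fun y => -b y) x - avc (fun y => -b y) z' r'| ≤ B * r' ^ n := by
      intro z' r' hr'
      have : ∀ x, |(fun y => -b y) x - avc (fun y => -b y) z' r'| = |b x - avc b z' r'| := by
        intro x
        rw [avc_neg]
        simp only
        rw [← abs_neg]
        congr 1
        ring
      calc ∫ x in cube z' r', |(fun y => -b y) x - avc (fun y => -b y) z' r'|
          = ∫ x in cube z' r', |b x - avc b z' r'| := by
            apply setIntegral_congr_fun (measurableSet_cube _ _) fun x _ => this x
        _ ≤ B * r' ^ n := HB z' r' hr'
    have hfin := final hb.neg (neg_pos.2 hneg) hB hsB HB' z hr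
    calc ∫⁻ x in cube z r, ENNReal.ofReal (Real.exp (s * (b x - avc b z r)))
        = ∫⁻ x in cube z r,
            ENNReal.ofReal (Real.exp (-s * ((fun y => -b y) x - avc (fun y => -b y) z r))) := by
          apply lintegral_congr
          intro x
          congr 2
          rw [avc_neg]
          ring
      _ ≤ ENNReal.ofReal (2 * r ^ n) := hfin
  · have habs : |s| = s := abs_of_pos hpos
    rw [habs] at hsB
    exact final hb hpos hB hsB HB z hr

lemma avgR_Icc {b : (Fin n → ℝ) → ℝ} (z : Fin n → ℝ) {r : ℝ} (hr : 0 < r) :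
    avgR (Set.Icc z (z + fun _ => r)) b = avc b z r := by
  rw [avgR, volume_Icc' z hr.le, ENNReal.toReal_ofReal (by positivity),
    ← setIntegral_congr_set (cube_ae_Icc z hr.le), avc]

lemma HB_of_bmo {b : (Fin n → ℝ) → ℝ} (hb : LocallyIntegrable b volume) {C : ℝ} (hC : 0 ≤ C)
    (hbmo : bmoNorm n b ≤ ENNReal.ofReal C) :
    ∀ (z : Fin n → ℝ) (r : ℝ), 0 < r → ∫ x in cube z r, |b x - avc b z r| ≤ C * r ^ n := by
  intro z r hr
  have hrn : (0:ℝ) < r ^ n := pow_pos hr n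
  set Q := Set.Icc z (z + fun _ => r) with hQdef
  have hQc : IsCube Q := ⟨z, r, hr, rfl⟩
  have hvol : volume Q = ENNReal.ofReal (r ^ n) := volume_Icc' z hr.le
  have hne0 : volume Q ≠ 0 := by rw [hvol]; simp [hrn]
  have hnetop : volume Q ≠ ⊤ := by rw [hvol]; exact ofReal_ne_top
  have hsup : (∫⁻ x in Q, (‖b x - avgR Q b‖₊ : ℝ≥0∞)) / volume Q ≤ ENNReal.ofReal C := by
    refine le_trans ?_ hbmo
    exact le_iSup₂ (f := fun (Q' : Set (Fin n → ℝ)) (_ : IsCube Q') =>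
      (∫⁻ x in Q', (‖b x - avgR Q' b‖₊ : ℝ≥0∞)) / volume Q') Q hQc
  have hlin : ∫⁻ x in Q, (‖b x - avgR Q b‖₊ : ℝ≥0∞) ≤ ENNReal.ofReal C * volume Q :=
    (ENNReal.div_le_iff_le_mul (Or.inl hne0) (Or.inl hnetop)).1 hsup
  have havgq : avgR Q b = avc b z r := avgR_Icc z hr
  have heq2 : (∫⁻ x in Q, (‖b x - avgR Q b‖₊ : ℝ≥0∞))
      = ∫⁻ x in cube z r, (‖b x - avc b z r‖₊ : ℝ≥0∞) := by
    rw [havgq, ← setLIntegral_congr (cube_ae_Icc z hr.le)]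
  rw [heq2] at hlin
  have hmeas' : AEStronglyMeasurable (fun x => b x - avc b z r) (volume.restrict (cube z r)) :=
    (hb.aestronglyMeasurable.restrict).sub aestronglyMeasurable_const
  have key : ∫ x in cube z r, |b x - avc b z r|
      = (∫⁻ x in cube z r, (‖b x - avc b z r‖₊ : ℝ≥0∞)).toReal := by
    exact integral_norm_eq_lintegral_enorm hmeas'
  rw [key]
  calc (∫⁻ x in cube z r, (‖b x - avc b z r‖₊ : ℝ≥0∞)).toReal
      ≤ (ENNReal.ofReal C * volume Q).toReal := by
        apply ENNReal.toReal_mono _ hlin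
        rw [hvol, ← ENNReal.ofReal_mul hC]
        exact ofReal_ne_top
    _ = C * r ^ n := by
        rw [hvol, ← ENNReal.ofReal_mul hC, ENNReal.toReal_ofReal (by positivity)]

end JN


/-- There is `ε_n > 0` such that for any real-valued locally integrable `b`
with `‖b‖_{BMO} < ∞` and any `s ∈ ℝ` with `|s| ‖b‖_{BMO} ≤ ε_n`, one has
`⨍_Q e^{s(b - ⟨b⟩_Q)} ≤ 2` on every cube `Q`. -/
theorem exp_john_nirenberg_signed (n : ℕ) :
    ∃ ε : ℝ, 0 < ε ∧
      ∀ b : (Fin n → ℝ) → ℝ, MeasureTheory.LocallyIntegrable b volume →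
        bmoNorm n b ≠ ⊤ →
        ∀ s : ℝ, ENNReal.ofReal |s| * bmoNorm n b ≤ ENNReal.ofReal ε →
          ∀ Q : Set (Fin n → ℝ), IsCube Q →
            (avgL Q fun x => ENNReal.ofReal (Real.exp (s * (b x - avgR Q b)))) ≤ 2 := by
  refine ⟨1 / (40 * 2 ^ n), by positivity, ?_⟩
  intro b hb _hfin s hsmall Q hQ
  obtain ⟨a, h, hh, rfl⟩ := hQ
  have hrn : (0:ℝ) < h ^ n := pow_pos hh n
  have hvol : volume (Set.Icc a (a + fun _ => h)) = ENNReal.ofReal (h ^ n) :=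
    JN.volume_Icc' a hh.le
  have hvol0 : (ENNReal.ofReal (h ^ n) : ℝ≥0∞) ≠ 0 := by simp [hrn]
  by_cases hs0 : s = 0
  · subst hs0
    have hone : (avgL (Set.Icc a (a + fun _ => h))
        fun x => ENNReal.ofReal (Real.exp (0 * (b x - avgR (Set.Icc a (a + fun _ => h)) b)))) = 1 := by
      rw [avgL]
      simp only [zero_mul, Real.exp_zero, ENNReal.ofReal_one]
      rw [setLIntegral_one, hvol, ENNReal.div_self hvol0 ENNReal.ofReal_ne_top]
    rw [hone]
    exact one_le_two
  · have habs : 0 < |s| := abs_pos.2 hs0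
    set C : ℝ := (1 / (40 * 2 ^ n)) / |s| with hCdef
    have hCpos : 0 < C := by positivity
    have hbmo : bmoNorm n b ≤ ENNReal.ofReal C := by
      have h1 : bmoNorm n b ≤ ENNReal.ofReal (1 / (40 * 2 ^ n)) / ENNReal.ofReal |s| := by
        rw [ENNReal.le_div_iff_mul_le (Or.inl (ENNReal.ofReal_pos.2 habs).ne') (Or.inl ENNReal.ofReal_ne_top)]
        rwa [mul_comm]
      rwa [← ENNReal.ofReal_div_of_pos habs] at h1
    have HB := JN.HB_of_bmo hb hCpos.le hbmo
    have hsB : |s| * C * (4 * 2 ^ n) ≤ 1 / 10 := by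
      have h2n : (0:ℝ) < 2 ^ n := by positivity
      have hmul : |s| * C = 1 / (40 * 2 ^ n) := by
        rw [hCdef]
        field_simp
      rw [hmul]
      have hfin : (1 / (40 * 2 ^ n) : ℝ) * (4 * 2 ^ n) = 1 / 10 := by
        field_simp
        ring
      rw [hfin]
    have hfinal := JN.final_abs hb hs0 hCpos hsB HB a hh
    rw [avgL, JN.avgR_Icc a hh,
      ← setLIntegral_congr (JN.cube_ae_Icc a hh.le), hvol]
    calc (∫⁻ x in JN.cube a h, ENNReal.ofReal (Real.exp (s * (b x - JN.avc b a h))))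
          / ENNReal.ofReal (h ^ n)
        ≤ ENNReal.ofReal (2 * h ^ n) / ENNReal.ofReal (h ^ n) :=
          ENNReal.div_le_div_right hfinal _
      _ = 2 := by
          rw [ENNReal.ofReal_mul (by norm_num), ENNReal.ofReal_ofNat,
            mul_div_assoc, ENNReal.div_self hvol0 ENNReal.ofReal_ne_top, mul_one]

end
end

section
/- Let $A$ be a complex Banach algebra, $a,t\in A$, $k\ge 0$ an integer, and $\delta>0$. Then the $k$-fold iterated commutator admits the Cauchy integral representation $\mathrm{ad}_a^k(t)=\frac{k!}{2\pi i}\oint_{|z|=\delta}\frac{\exp(za)\,t\,\exp(-za)}{z^{k+1}}\,dz$, where the integral is over the positively oriented circle of radius $\delta$ about the origin. -/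
open scoped Nat

open NormedSpace in
private lemma aux_hasDerivAt {A : Type*} [NormedRing A] [NormedAlgebra ℂ A]
    [CompleteSpace A] (a c : A) (z : ℂ) :
    HasDerivAt (fun w : ℂ => exp (w • a) * c * exp (-(w • a)))
      (exp (z • a) * (a * c - c * a) * exp (-(z • a))) z := by
  have h1 : HasDerivAt (fun w : ℂ => exp (w • a)) (a * exp (z • a)) z :=
    hasDerivAt_exp_smul_const' a z
  have h2 : HasDerivAt (fun w : ℂ => exp (-(w • a))) (exp (-(z • a)) * -a) z := by
    simpa [smul_neg] using hasDerivAt_exp_smul_const (-a) z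
  have h := (h1.mul_const c).mul h2
  have hca : Commute a (exp (z • a)) := (((Commute.refl a).smul_right z)).exp_right
  have hca' : Commute a (exp (-(z • a))) :=
    ((((Commute.refl a).smul_right z)).neg_right).exp_right
  convert h using 1
  · rfl
  rw [show a * exp (z • a) = exp (z • a) * a from hca.eq,
    show exp (-(z • a)) * -a = -a * exp (-(z • a)) from (hca'.neg_left.eq).symm]
  noncomm_ring

open NormedSpace in
private lemma aux_iteratedDeriv {A : Type*} [NormedRing A] [NormedAlgebra ℂ A]
    [CompleteSpace A] (a : A) (k : ℕ) : ∀ (c : A) (z : ℂ),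
    iteratedDeriv k (fun w : ℂ => exp (w • a) * c * exp (-(w • a))) z
      = exp (z • a) * ((fun x => a * x - x * a)^[k] c) * exp (-(z • a)) := by
  induction k with
  | zero => intro c z; simp [iteratedDeriv_zero]
  | succ k ih =>
    intro c z
    rw [iteratedDeriv_succ']
    have hd : deriv (fun w : ℂ => exp (w • a) * c * exp (-(w • a)))
        = fun w : ℂ => exp (w • a) * (a * c - c * a) * exp (-(w • a)) := by
      funext w; exact (aux_hasDerivAt a c w).deriv
    rw [hd, ih (a * c - c * a) z, Function.iterate_succ_apply]

/-- Cauchy integral representation of the iterated commutator in a complex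
Banach algebra: `adₐᵏ(t) = (k!/(2πi)) ∮_{|z|=δ} exp(za) t exp(-za) z^{-(k+1)} dz`. -/
theorem ad_iter_eq_circleIntegral (A : Type*) [NormedRing A] [NormedAlgebra ℂ A]
    [CompleteSpace A] (a t : A) (k : ℕ) (δ : ℝ) (hδ : 0 < δ) :
    (fun x => a * x - x * a)^[k] t =
      ((k ! : ℂ) / (2 * Real.pi * Complex.I)) •
        ∮ z in C(0, δ),
          (z ^ (k + 1))⁻¹ • (NormedSpace.exp (z • a) * t * NormedSpace.exp (-(z • a))) := by
  set f : ℂ → A := fun w => NormedSpace.exp (w • a) * t * NormedSpace.exp (-(w • a)) with hf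
  have hdiff : Differentiable ℂ f := fun z => (aux_hasDerivAt a t z).differentiableAt
  have hδ' : (0 : NNReal) < δ.toNNReal := by simpa using hδ
  have H := hdiff.hasFPowerSeriesOnBall 0 hδ'
  have key := H.factorial_smul (1 : ℂ) k
  rw [cauchyPowerSeries_apply, ← iteratedDeriv_eq_iteratedFDeriv, aux_iteratedDeriv] at key
  simp only [zero_smul, neg_zero, NormedSpace.exp_zero, one_mul, mul_one] at key
  rw [Real.coe_toNNReal δ hδ.le] at key
  have hint : (∮ z in C((0:ℂ), δ), ((1:ℂ) / (z - 0)) ^ k • (z - 0)⁻¹ • f z)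
      = ∮ z in C((0:ℂ), δ), (z ^ (k + 1))⁻¹ • f z := by
    refine circleIntegral.integral_congr hδ.le fun z _ => ?_
    rw [sub_zero, smul_smul, one_div, inv_pow, pow_succ, mul_inv]
  rw [hint] at key
  rw [← key, div_eq_mul_inv, mul_smul, Nat.cast_smul_eq_nsmul]
end
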